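/- arXiv:2007.13846 — 10 statements merged into one kernel-verified Lean document; each statement's English description precedes it below -/
import Mathlib

section
/- Let σ = ⟨v₁,…,v_k⟩ be a strictly convex finitely generated cone in a lattice N. Then every small vector of σ is a sum of finitely many minimal vectors of σ; that is, every small vector lies in the additive submonoid of N generated by the minimal vectors of σ. -/
universe u

/-- The cone of all nonnegative rational combinations of a finite family of vectors. -/
def coneSpan {V : Type u} [AddCommGroup V] [Module ℚ V] {k : ℕ} (v : Fin k → V) : Set V :=
  {x | ∃ c : Fin k → ℚ, (∀ i, 0 ≤ c i) ∧ x = ∑ i, c i • v i}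

/-- A finitely generated cone is strictly convex if it contains no line,
i.e. `σ ∩ (−σ) = {0}`. -/
def StrictlyConvexCone {V : Type u} [AddCommGroup V] [Module ℚ V] {k : ℕ}
    (v : Fin k → V) : Prop :=
  ∀ x ∈ coneSpan v, -x ∈ coneSpan v → x = 0

/-- `w` is a primitive vector of the lattice `N`: a nonzero element of `N` generating the
monoid `ℚ≥0·w ∩ N`. -/
def IsPrimitive {V : Type u} [AddCommGroup V] [Module ℚ V] (N : Submodule ℤ V)
    (w : V) : Prop :=
  w ∈ N ∧ w ≠ 0 ∧ ∀ x ∈ N, (∃ c : ℚ, 0 ≤ c ∧ x = c • w) → ∃ m : ℕ, x = (m : ℤ) • w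

/-- `v` lists the vertices of the cone it spans: all entries are primitive and the number of
generators is minimal among generating families of the same cone. -/
def IsVertexFamily {V : Type u} [AddCommGroup V] [Module ℚ V] (N : Submodule ℤ V) {k : ℕ}
    (v : Fin k → V) : Prop :=
  (∀ i, IsPrimitive N (v i)) ∧
    ∀ (m : ℕ) (w : Fin m → V), coneSpan w = coneSpan v → k ≤ m

/-- The lattice `N_σ = N ∩ span_ℚ σ` of the cone spanned by `v`. -/
def latticeOf {V : Type u} [AddCommGroup V] [Module ℚ V] (N : Submodule ℤ V) {k : ℕ}
    (v : Fin k → V) : Submodule ℤ V :=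
  N ⊓ (Submodule.span ℚ (Set.range v)).restrictScalars ℤ

/-- The lattice `N ∩ span_ℚ S` of a subset `S`. -/
def latticeOfSet {V : Type u} [AddCommGroup V] [Module ℚ V] (N : Submodule ℤ V)
    (S : Set V) : Submodule ℤ V :=
  N ⊓ (Submodule.span ℚ S).restrictScalars ℤ

/-- A minimal vector of the cone spanned by `v`: a nonzero integral vector of the cone which
is not a vertex and cannot be written as a sum of two nonzero integral vectors of the cone. -/
def IsMinimalVec {V : Type u} [AddCommGroup V] [Module ℚ V] (N : Submodule ℤ V) {k : ℕ}
    (v : Fin k → V) (x : V) : Prop :=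
  x ∈ coneSpan v ∧ x ∈ N ∧ x ≠ 0 ∧ (∀ i, x ≠ v i) ∧
    ¬ ∃ y z : V, y ∈ coneSpan v ∧ y ∈ N ∧ y ≠ 0 ∧
      z ∈ coneSpan v ∧ z ∈ N ∧ z ≠ 0 ∧ x = y + z

/-- A small vector of the cone spanned by `v`: a nonzero integral vector of the cone which
cannot be written as a vertex plus an integral vector of the cone. -/
def IsSmallVec {V : Type u} [AddCommGroup V] [Module ℚ V] (N : Submodule ℤ V) {k : ℕ}
    (v : Fin k → V) (x : V) : Prop :=
  x ∈ coneSpan v ∧ x ∈ N ∧ x ≠ 0 ∧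
    ∀ i, ¬ ∃ y : V, y ∈ coneSpan v ∧ y ∈ N ∧ x = v i + y

/-- A cone is regular if its generators form part of a `ℤ`-basis of the lattice `N`. -/
def IsRegularCone {V : Type u} [AddCommGroup V] [Module ℚ V] (N : Submodule ℤ V) {k : ℕ}
    (v : Fin k → V) : Prop :=
  ∃ (ι : Type u) (b : Module.Basis ι ℤ ↥N) (f : Fin k → ι),
    Function.Injective f ∧ ∀ i, (b (f i) : V) = v i

/-- The determinant of a simplicial cone, computed with respect to a `ℤ`-basis of its
lattice `N_σ`. -/
noncomputable def coneDet {V : Type u} [AddCommGroup V] [Module ℚ V] (N : Submodule ℤ V) {k : ℕ}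
    (v : Fin k → V) (hv : ∀ i, v i ∈ latticeOf N v)
    (b : Module.Basis (Fin k) ℤ ↥(latticeOf N v)) : ℤ :=
  (Matrix.of fun i j => b.repr ⟨v j, hv j⟩ i).det

/-- `F` is a face of the cone `σ` (both given as subsets): the vanishing locus on `σ` of a
`ℚ`-linear functional which is nonnegative on `σ`. -/
def IsFaceOf {V : Type u} [AddCommGroup V] [Module ℚ V] (σ F : Set V) : Prop :=
  ∃ φ : V →ₗ[ℚ] ℚ, (∀ x ∈ σ, 0 ≤ φ x) ∧ F = {x | x ∈ σ ∧ φ x = 0}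

/-- `v₁, …, v_k` are `ℚ`-linearly independent from `w₁, …, w_s`. -/
def RelSimplicial {V : Type u} [AddCommGroup V] [Module ℚ V] {k s : ℕ}
    (v : Fin k → V) (w : Fin s → V) : Prop :=
  ∀ (c : Fin k → ℚ) (d : Fin s → ℚ),
    (∑ i, c i • v i) + ∑ j, d j • w j = 0 → ∀ i, c i = 0

/-- A cone (given as a subset, with its lattice) is irreducible if it admits no direct sum
decomposition `F = F₁ ⊕ ρ₁` in which `ρ₁` is a regular cone of positive dimension. -/
def IsIrreducibleCone {V : Type u} [AddCommGroup V] [Module ℚ V] (N : Submodule ℤ V)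
    (F : Set V) : Prop :=
  ¬ ∃ (m l : ℕ) (t : Fin m → V) (r : Fin l → V), 0 < l ∧
      IsRegularCone N r ∧
      F = coneSpan (Fin.append t r) ∧
      latticeOfSet N F = latticeOf N t ⊔ latticeOf N r ∧
      Disjoint (latticeOf N t) (latticeOf N r)


/-- Linear map `c ↦ ∑ i, c i • w i`. -/
noncomputable def sumSmul {K : Type} [Field K] {E : Type} [AddCommGroup E] [Module K E]
    {s : ℕ} (w : Fin s → E) : (Fin s → K) →ₗ[K] E where
  toFun c := ∑ i, c i • w i
  map_add' a b := by simp [add_smul, Finset.sum_add_distrib]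
  map_smul' r a := by simp [Finset.smul_sum, mul_smul]

@[simp] lemma sumSmul_apply {K : Type} [Field K] {E : Type} [AddCommGroup E] [Module K E]
    {s : ℕ} (w : Fin s → E) (c : Fin s → K) : sumSmul w c = ∑ i, c i • w i := rfl

/-- The coordinatewise `ℚ → ℝ` cast. -/
noncomputable def ratCastPi {m : ℕ} (c : Fin m → ℚ) : Fin m → ℝ := fun j => (c j : ℝ)

/-- A `ℚ`-basis of `ℚ^m`, cast to `ℝ^m`, yields an `ℝ`-basis. -/
lemma exists_real_basis {m : ℕ} {ι : Type} [Fintype ι] [DecidableEq ι]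
    (B : Module.Basis ι ℚ (Fin m → ℚ)) :
    ∃ C : Module.Basis ι ℝ (Fin m → ℝ), ∀ i, C i = ratCastPi (B i) := by
  classical
  let e : ι ≃ Fin m := B.indexEquiv (Pi.basisFun ℚ (Fin m))
  let B' : Module.Basis (Fin m) ℚ (Fin m → ℚ) := B.reindex e
  let M : Matrix (Fin m) (Fin m) ℚ := (Pi.basisFun ℚ (Fin m)).toMatrix B'
  haveI : Invertible M := (Pi.basisFun ℚ (Fin m)).invertibleToMatrix B'
  have hMdet : M.det ≠ 0 := by
    have := M.isUnit_det_of_invertible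
    exact IsUnit.ne_zero this
  let Mr : Matrix (Fin m) (Fin m) ℝ := M.map (Rat.castHom ℝ)
  have hMr : IsUnit Mr.det := by
    have h1 : Mr.det = ((M.det : ℚ) : ℝ) := (RingHom.map_det (Rat.castHom ℝ) M).symm
    rw [h1, isUnit_iff_ne_zero]
    exact_mod_cast hMdet
  haveI : Invertible Mr := Mr.invertibleOfIsUnitDet hMr
  let L : (Fin m → ℝ) ≃ₗ[ℝ] (Fin m → ℝ) := Mr.toLinearEquiv' ‹_›
  refine ⟨((Pi.basisFun ℝ (Fin m)).map L).reindex e.symm, fun i => ?_⟩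
  rw [Module.Basis.reindex_apply, Equiv.symm_symm, Module.Basis.map_apply]
  have hL : ∀ x, L x = Mr.mulVec x := fun x => rfl
  rw [hL]
  funext j
  have hb : (Pi.basisFun ℝ (Fin m)) (e i) = Pi.single (e i) 1 := by
    simp [Pi.basisFun_apply]
  rw [hb, Matrix.mulVec_single]
  have : Mr j (e i) = ((M j (e i) : ℚ) : ℝ) := rfl
  simp only [MulOpposite.op_one, one_smul, Matrix.col_apply, this]
  have : M j (e i) = B' (e i) j := by
    simp [M, Module.Basis.toMatrix_apply]
  rw [this]
  simp [B', ratCastPi]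

/-- A `ℚ`-linearly-independent family in `ℚ^n` is `ℝ`-linearly independent after casting. -/
lemma linearIndependent_ratCast {n p : ℕ} {g : Fin p → (Fin n → ℚ)}
    (hg : LinearIndependent ℚ g) :
    LinearIndependent ℝ (fun i => ratCastPi (g i)) := by
  classical
  have hs : LinearIndepOn ℚ id (Set.range g) := hg.linearIndepOn_id
  let B : Module.Basis _ ℚ (Fin n → ℚ) := Module.Basis.extend hs
  haveI : Fintype ↥(hs.extend (Set.subset_univ _)) := FiniteDimensional.fintypeBasisIndex B
  obtain ⟨C, hC⟩ := exists_real_basis B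
  let h : Fin p → ↥(hs.extend (Set.subset_univ _)) :=
    fun i => ⟨g i, hs.subset_extend _ ⟨i, rfl⟩⟩
  have hinj : Function.Injective h := by
    intro i j hij
    apply hg.injective
    exact congrArg Subtype.val hij
  have key : (fun i => ratCastPi (g i)) = ⇑C ∘ h := by
    funext i
    have : B (h i) = g i := Module.Basis.extend_apply_self hs (h i)
    simp only [Function.comp_apply, hC, this]
  rw [key]
  exact C.linearIndependent.comp h hinj

/-- If rational vectors admit a strictly positive real dependence, they admit a strictly
positive rational dependence. -/
lemma rational_dependence {n s : ℕ} (w : Fin s → (Fin n → ℚ)) (lam : Fin s → ℝ)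
    (hpos : ∀ i, 0 < lam i) (hker : ∑ i, lam i • ratCastPi (w i) = 0) :
    ∃ μ : Fin s → ℚ, (∀ i, 0 < μ i) ∧ ∑ i, μ i • w i = 0 := by
  classical
  set T : (Fin s → ℚ) →ₗ[ℚ] (Fin n → ℚ) := sumSmul w with hT
  set K : Submodule ℚ (Fin s → ℚ) := LinearMap.ker T with hK
  obtain ⟨Q, hQ⟩ := K.exists_isCompl
  let bK := Module.finBasis ℚ ↥K
  let bQ := Module.finBasis ℚ ↥Q
  let BB : Module.Basis _ ℚ (Fin s → ℚ) := (bK.prod bQ).map (Submodule.prodEquivOfIsCompl K Q hQ)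
  have hBBl : ∀ a, BB (Sum.inl a) = ↑(bK a) := by
    intro a
    simp [BB, Module.Basis.map_apply, Module.Basis.prod_apply, Submodule.coe_prodEquivOfIsCompl']
  have hBBr : ∀ b, BB (Sum.inr b) = ↑(bQ b) := by
    intro b
    simp [BB, Module.Basis.map_apply, Module.Basis.prod_apply, Submodule.coe_prodEquivOfIsCompl']
  obtain ⟨CC, hCC⟩ := exists_real_basis BB
  set r := CC.repr lam with hr
  have hrepr : ∑ idx, r idx • CC idx = lam := CC.sum_repr lam
  -- real linear map
  set Tr : (Fin s → ℝ) →ₗ[ℝ] (Fin n → ℝ) := sumSmul (fun i => ratCastPi (w i)) with hTr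
  have hcast : ∀ c : Fin s → ℚ, Tr (ratCastPi c) = ratCastPi (T c) := by
    intro c
    funext j
    simp only [hTr, hT, sumSmul_apply, ratCastPi, Finset.sum_apply, Pi.smul_apply,
      smul_eq_mul]
    push_cast
    rfl
  have h0 : Tr lam = 0 := by simpa [hTr] using hker
  have hsplit : Tr lam = ∑ idx, r idx • Tr (CC idx) := by
    rw [← hrepr]
    simp [map_sum, map_smul]
  -- the `inl` terms vanish
  have hinl : ∀ a, Tr (CC (Sum.inl a)) = 0 := by
    intro a
    rw [hCC, hBBl, hcast]
    have : T ↑(bK a) = 0 := (bK a).2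
    rw [this]
    funext j; simp [ratCastPi]
  set g : Fin (Module.finrank ℚ ↥Q) → (Fin n → ℚ) := fun b => T ↑(bQ b) with hg
  have hTrCCr : ∀ b, Tr (CC (Sum.inr b)) = ratCastPi (g b) := by
    intro b; rw [hCC, hBBr, hcast]
  have hsum2 : ∑ b, r (Sum.inr b) • ratCastPi (g b) = 0 := by
    have := hsplit.symm.trans h0
    rw [Fintype.sum_sum_type] at this
    simp only [hinl, smul_zero, Finset.sum_const_zero, zero_add, hTrCCr] at this
    exact this
  -- `g` is `ℚ`-linearly independent
  have hgind : LinearIndependent ℚ g := by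
    have h1 : LinearIndependent ℚ (fun b => (↑(bQ b) : Fin s → ℚ)) :=
      bQ.linearIndependent.map' Q.subtype (Submodule.ker_subtype Q)
    have hspan : Submodule.span ℚ (Set.range fun b => (↑(bQ b) : Fin s → ℚ)) ≤ Q := by
      rw [Submodule.span_le]
      rintro _ ⟨b, rfl⟩
      exact (bQ b).2
    have hdisj : Disjoint (Submodule.span ℚ (Set.range fun b => (↑(bQ b) : Fin s → ℚ)))
        (LinearMap.ker T) := Disjoint.mono_left hspan hQ.symm.disjoint
    exact h1.map hdisj
  have hzero : ∀ b, r (Sum.inr b) = 0 :=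
    Fintype.linearIndependent_iff.mp (linearIndependent_ratCast hgind) _ hsum2
  -- lam is a real combination of the (cast) basis of K
  have hlam : lam = ∑ a, r (Sum.inl a) • ratCastPi ((bK a : Fin s → ℚ)) := by
    rw [← hrepr, Fintype.sum_sum_type]
    simp only [hzero, zero_smul, Finset.sum_const_zero, add_zero]
    congr 1
    funext a
    rw [hCC, hBBl]
  -- density argument
  set F : (Fin (Module.finrank ℚ ↥K) → ℝ) → (Fin s → ℝ) :=
    fun t => ∑ a, t a • ratCastPi ((bK a : Fin s → ℚ)) with hF
  have hFcont : Continuous F := by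
    apply continuous_finset_sum
    intro a _
    exact (continuous_apply a).smul continuous_const
  set U : Set (Fin s → ℝ) := Set.pi Set.univ (fun _ => Set.Ioi (0:ℝ)) with hU
  have hUopen : IsOpen U := isOpen_set_pi Set.finite_univ (fun _ _ => isOpen_Ioi)
  have hF0 : F (fun a => r (Sum.inl a)) = lam := hlam.symm
  have hmem : F (fun a => r (Sum.inl a)) ∈ U := by
    rw [hF0]
    intro i _
    exact hpos i
  have hO : IsOpen (F ⁻¹' U) := hUopen.preimage hFcont
  obtain ⟨ε, hε, hball⟩ := Metric.isOpen_iff.mp hO _ hmem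
  have hqex : ∀ a, ∃ q : ℚ, |r (Sum.inl a) - (q:ℝ)| < ε := fun a => exists_rat_near _ hε
  choose q hq using hqex
  have hqmem : (fun a => ((q a : ℚ) : ℝ)) ∈ F ⁻¹' U := by
    apply hball
    rw [Metric.mem_ball, dist_pi_lt_iff hε]
    intro a
    rw [Real.dist_eq, abs_sub_comm]
    exact hq a
  set μ' : ↥K := ∑ a, q a • bK a with hμ'
  refine ⟨(μ' : Fin s → ℚ), ?_, ?_⟩
  · intro i
    have hcoe : ratCastPi (μ' : Fin s → ℚ) = F (fun a => ((q a : ℚ) : ℝ)) := by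
      funext j
      simp only [hμ', hF, ratCastPi]
      rw [Finset.sum_apply]
      push_cast [Submodule.coe_sum, Finset.sum_apply, Pi.smul_apply, smul_eq_mul]
      rfl
    have := hqmem
    rw [Set.mem_preimage, ← hcoe] at this
    have h := this i (Set.mem_univ i)
    simpa [ratCastPi, Rat.cast_pos] using h
  · have h2 : T (μ' : Fin s → ℚ) = 0 := μ'.2
    exact h2

/-- A positively independent finite family in a `ℚ`-vector space admits a linear functional
positive on every member. -/
lemma exists_pos_functional {V : Type u} [AddCommGroup V] [Module ℚ V] {k : ℕ}
    (v : Fin k → V)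
    (hpi : ∀ c : Fin k → ℚ, (∀ i, 0 ≤ c i) → ∑ i, c i • v i = 0 → ∀ i, c i = 0) :
    ∃ φ : V →ₗ[ℚ] ℚ, ∀ i, 0 < φ (v i) := by
  classical
  set W : Submodule ℚ V := Submodule.span ℚ (Set.range v) with hW
  haveI : FiniteDimensional ℚ ↥W := FiniteDimensional.span_of_finite ℚ (Set.finite_range v)
  set n := Module.finrank ℚ ↥W with hn
  let b : Module.Basis (Fin n) ℚ ↥W := Module.finBasis ℚ ↥W
  let v' : Fin k → ↥W := fun i => ⟨v i, Submodule.subset_span ⟨i, rfl⟩⟩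
  set w : Fin k → (Fin n → ℚ) := fun i => b.equivFun (v' i) with hw
  set uu : Fin k → (Fin n → ℝ) := fun i => ratCastPi (w i) with huu
  -- rational positive independence of `w`
  have hw_pi : ∀ c : Fin k → ℚ, (∀ i, 0 ≤ c i) → ∑ i, c i • w i = 0 → ∀ i, c i = 0 := by
    intro c hc hsum
    have h1 : b.equivFun (∑ i, c i • v' i) = 0 := by
      rw [map_sum]
      simpa [map_smul, hw] using hsum
    have h2 : ∑ i, c i • v' i = 0 := by
      have := b.equivFun.map_eq_zero_iff.mp h1
      exact this
    have h3 : ∑ i, c i • v i = 0 := by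
      have := congrArg (Subtype.val) h2
      simpa using this
    exact hpi c hc h3
  -- real positive independence of `uu`
  have hu_pi : ∀ lam : Fin k → ℝ, (∀ i, 0 ≤ lam i) → ∑ i, lam i • uu i = 0 →
      ∀ i, lam i = 0 := by
    intro lam hlam hsum
    by_contra hcon
    push_neg at hcon
    obtain ⟨i0, hi0⟩ := hcon
    have hi0' : 0 < lam i0 := lt_of_le_of_ne (hlam i0) (Ne.symm hi0)
    -- restrict to the support
    let e : Fin (Fintype.card {i : Fin k // 0 < lam i}) ≃ {i : Fin k // 0 < lam i} :=
      (Fintype.equivFin _).symm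
    set w' := fun a : Fin (Fintype.card {i : Fin k // 0 < lam i}) => w ((e a) : Fin k) with hw'
    set lam' := fun a : Fin (Fintype.card {i : Fin k // 0 < lam i}) => lam ((e a) : Fin k) with hlam'
    have hpos' : ∀ a, 0 < lam' a := fun a => (e a).2
    have hzoff : ∀ i ∈ Finset.univ, lam i • uu i ≠ 0 → 0 < lam i := by
      intro i _ hne
      rcases lt_or_eq_of_le (hlam i) with h | h
      · exact h
      · exact absurd (by rw [← h, zero_smul]) hne
    have hsum1 : ∑ i ∈ Finset.univ.filter (fun i => 0 < lam i), lam i • uu i = 0 := by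
      rw [Finset.sum_filter_of_ne hzoff]
      exact hsum
    haveI hft : Fintype {i : Fin k // 0 < lam i} := Subtype.fintype _
    have hsub := Finset.sum_subtype (p := fun i => 0 < lam i) (F := hft)
      (Finset.filter (fun i => 0 < lam i) Finset.univ) (fun x => by simp)
      (fun i => lam i • uu i)
    have hsum2 : ∑ a : {i : Fin k // 0 < lam i}, lam (a : Fin k) • uu (a : Fin k) = 0 := by
      rw [← hsub]
      exact hsum1
    have hsum3 : ∑ a, lam' a • ratCastPi (w' a) = 0 := by
      rw [← hsum2]
      exact Equiv.sum_comp e (fun s => lam (s : Fin k) • uu (s : Fin k))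
    obtain ⟨μ', hμpos, hμsum⟩ := rational_dependence w' lam' hpos' hsum3
    set μ : Fin k → ℚ := fun i => if h : 0 < lam i then μ' (e.symm ⟨i, h⟩) else 0 with hμ
    have hμnn : ∀ i, 0 ≤ μ i := by
      intro i
      by_cases h : 0 < lam i
      · simp only [hμ, dif_pos h]
        exact le_of_lt (hμpos _)
      · simp only [hμ, dif_neg h]
        exact le_refl 0
    have hμw : ∑ i, μ i • w i = 0 := by
      have hz : ∀ i ∈ Finset.univ, μ i • w i ≠ 0 → 0 < lam i := by
        intro i _ hne
        by_contra h
        exact hne (by simp [hμ, h])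
      calc ∑ i, μ i • w i = ∑ i ∈ Finset.univ.filter (fun i => 0 < lam i), μ i • w i :=
              (Finset.sum_filter_of_ne hz).symm
        _ = ∑ a : {i : Fin k // 0 < lam i}, μ (a : Fin k) • w (a : Fin k) :=
              Finset.sum_subtype _ (fun x => by simp) _
        _ = ∑ a, μ ((e a) : Fin k) • w ((e a) : Fin k) := (Equiv.sum_comp e _).symm
        _ = ∑ a, μ' a • w' a := by
              apply Finset.sum_congr rfl
              intro a _
              congr 1
              simp only [hμ]
              rw [dif_pos (e a).2]
              have h5 : (⟨((e a) : Fin k), (e a).2⟩ : {i : Fin k // 0 < lam i}) = e a :=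
                Subtype.eta _ _
              rw [h5, e.symm_apply_apply]
        _ = 0 := hμsum
    have := hw_pi μ hμnn hμw i0
    simp only [hμ] at this
    rw [dif_pos hi0'] at this
    exact absurd this (ne_of_gt (hμpos _))
  -- separation in `ℝ^n`
  set S0 : Set (Fin n → ℝ) :=
    {x | ∃ lam : Fin k → ℝ, (∀ i, 0 ≤ lam i) ∧ ∑ i, lam i = 1 ∧ x = ∑ i, lam i • uu i}
    with hS0
  have hconv : Convex ℝ S0 := by
    rintro x ⟨lx, hlx, hlx1, rfl⟩ y ⟨ly, hly, hly1, rfl⟩ a c ha hc hac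
    refine ⟨fun i => a * lx i + c * ly i,
      fun i => add_nonneg (mul_nonneg ha (hlx i)) (mul_nonneg hc (hly i)), ?_, ?_⟩
    · rw [Finset.sum_add_distrib, ← Finset.mul_sum, ← Finset.mul_sum, hlx1, hly1]
      simpa using hac
    · rw [Finset.smul_sum, Finset.smul_sum, ← Finset.sum_add_distrib]
      apply Finset.sum_congr rfl
      intro i _
      rw [add_smul]
      simp [smul_smul]
  have hsub : Set.range uu ⊆ S0 := by
    rintro _ ⟨i, rfl⟩
    refine ⟨fun i' => if i' = i then 1 else 0, fun i' => by positivity, by simp, ?_⟩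
    simp [ite_smul]
  have h0 : (0 : Fin n → ℝ) ∉ convexHull ℝ (Set.range uu) := by
    intro hmem
    have : (0 : Fin n → ℝ) ∈ S0 := convexHull_min hsub hconv hmem
    obtain ⟨lam, hlam, hlam1, hlam0⟩ := this
    have := hu_pi lam hlam hlam0.symm
    rw [Finset.sum_congr rfl (fun i _ => this i)] at hlam1
    simpa using hlam1
  obtain ⟨f, s0, hfs0, hfb⟩ := geometric_hahn_banach_point_closed
    (convex_convexHull ℝ _) ((Set.finite_range uu).isCompact_convexHull ℝ).isClosed h0
  rw [map_zero] at hfs0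
  have hfu : ∀ i, s0 < f (uu i) := fun i =>
    hfb _ (subset_convexHull ℝ _ ⟨i, rfl⟩)
  -- decompose f along coordinates
  set g : Fin n → ℝ := fun j => f (Pi.single j 1) with hg
  have hfdec : ∀ y : Fin n → ℝ, f y = ∑ j, y j * g j := by
    intro y
    conv_lhs => rw [show y = ∑ j, y j • (Pi.single j 1 : Fin n → ℝ) by
      funext j'
      rw [Finset.sum_apply]
      simp [Pi.single_apply, eq_comm]]
    rw [map_sum]
    apply Finset.sum_congr rfl
    intro j _
    rw [map_smul]
    rfl
  -- rational approximation of g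
  set D : ℝ := (∑ i, ∑ j, |uu i j|) + 1 with hD
  have hD1 : 1 ≤ D := by
    rw [hD]
    have : 0 ≤ ∑ i, ∑ j, |uu i j| :=
      Finset.sum_nonneg fun i _ => Finset.sum_nonneg fun j _ => abs_nonneg _
    linarith
  have hDpos : 0 < D := lt_of_lt_of_le one_pos hD1
  set ε : ℝ := s0 / D with hε
  have hεpos : 0 < ε := div_pos hfs0 hDpos
  have hqex : ∀ j, ∃ q : ℚ, |g j - (q : ℝ)| < ε := fun j => exists_rat_near _ hεpos
  choose q hq using hqex
  have hkey : ∀ i, 0 < ∑ j, w i j * q j := by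
    intro i
    have hreal : (0:ℝ) < ∑ j, uu i j * (q j : ℝ) := by
      have heq : ∑ j, uu i j * (q j : ℝ)
          = f (uu i) + ∑ j, uu i j * ((q j : ℝ) - g j) := by
        rw [hfdec (uu i), ← Finset.sum_add_distrib]
        apply Finset.sum_congr rfl
        intro j _
        ring
      have hbound : |∑ j, uu i j * ((q j : ℝ) - g j)| < s0 := by
        calc |∑ j, uu i j * ((q j : ℝ) - g j)| ≤ ∑ j, |uu i j * ((q j : ℝ) - g j)| :=
              Finset.abs_sum_le_sum_abs _ _
          _ ≤ ∑ j, |uu i j| * ε := by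
              apply Finset.sum_le_sum
              intro j _
              rw [abs_mul]
              apply mul_le_mul_of_nonneg_left _ (abs_nonneg _)
              rw [abs_sub_comm]
              exact le_of_lt (hq j)
          _ ≤ (D - 1) * ε := by
              rw [← Finset.sum_mul]
              apply mul_le_mul_of_nonneg_right _ (le_of_lt hεpos)
              rw [hD]
              have : ∑ j, |uu i j| ≤ ∑ i', ∑ j, |uu i' j| :=
                Finset.single_le_sum (f := fun i' => ∑ j, |uu i' j|)
                  (fun i' _ => Finset.sum_nonneg fun j _ => abs_nonneg _) (Finset.mem_univ i)
              linarith
          _ < D * ε := by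
              apply mul_lt_mul_of_pos_right _ hεpos
              linarith
          _ = s0 := by
              rw [hε]
              field_simp
      have hfui := hfu i
      have := abs_lt.mp hbound
      rw [heq]
      linarith
    have hcast : ((∑ j, w i j * q j : ℚ) : ℝ) = ∑ j, uu i j * (q j : ℝ) := by
      push_cast
      rfl
    have := hreal
    rw [← hcast] at this
    exact_mod_cast this
  -- build the functional
  let φ0 : ↥W →ₗ[ℚ] ℚ := (sumSmul q) ∘ₗ (b.equivFun : ↥W ≃ₗ[ℚ] (Fin n → ℚ)).toLinearMap
  obtain ⟨Q', hQ'⟩ := W.exists_isCompl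
  let π : V →ₗ[ℚ] ↥W := W.projectionOnto Q' hQ'
  refine ⟨φ0 ∘ₗ π, fun i => ?_⟩
  have hπ : π (v i) = v' i := Submodule.projectionOnto_apply_left hQ' (v' i)
  have : (φ0 ∘ₗ π) (v i) = ∑ j, w i j * q j := by
    rw [LinearMap.comp_apply, hπ]
    simp only [φ0, LinearMap.comp_apply, LinearEquiv.coe_toLinearMap, sumSmul_apply]
    rw [hw]
    apply Finset.sum_congr rfl
    intro j _
    rw [smul_eq_mul]
  rw [this]
  exact hkey i

/-- Every small vector of a strictly convex finitely generated cone
`σ = ⟨v₁,…,v_k⟩` lies in the additive submonoid generated by the minimal vectors of `σ`. -/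
theorem small_vector_mem_closure_of_minimal_vectors
    {V : Type u} [AddCommGroup V] [Module ℚ V] (N : Submodule ℤ V) [Module.Finite ℤ ↥N]
    {k : ℕ} (v : Fin k → V)
    (hsc : StrictlyConvexCone v) (hvert : IsVertexFamily N v)
    (x : V) (hx : IsSmallVec N v x) :
    x ∈ AddSubmonoid.closure {y : V | IsMinimalVec N v y} := by
  classical
  have cs_zero : (0 : V) ∈ coneSpan v := ⟨fun _ => 0, fun i => le_refl 0, by simp⟩
  have cs_add : ∀ {y z : V}, y ∈ coneSpan v → z ∈ coneSpan v → y + z ∈ coneSpan v := by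
    rintro y z ⟨c, hc, rfl⟩ ⟨c', hc', rfl⟩
    refine ⟨fun i => c i + c' i, fun i => add_nonneg (hc i) (hc' i), ?_⟩
    rw [← Finset.sum_add_distrib]
    apply Finset.sum_congr rfl
    intro i _
    rw [add_smul]
  have hvne : ∀ i, v i ≠ 0 := fun i => (hvert.1 i).2.1
  -- positive independence of the vertices
  have hpi : ∀ c : Fin k → ℚ, (∀ i, 0 ≤ c i) → ∑ i, c i • v i = 0 → ∀ i, c i = 0 := by
    intro c hc hsum j
    have hB : ∑ i, (if i = j then c j else (0:ℚ)) • v i = c j • v j := by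
      simp [ite_smul, Finset.sum_ite_eq']
    have h2 : ∑ i, c i • v i
        = (∑ i, (if i = j then (0:ℚ) else c i) • v i)
          + ∑ i, (if i = j then c j else (0:ℚ)) • v i := by
      rw [← Finset.sum_add_distrib]
      apply Finset.sum_congr rfl
      intro i _
      by_cases h : i = j
      · subst h; simp
      · simp [h]
    rw [hsum, hB] at h2
    have h1 : ∑ i, (if i = j then (0:ℚ) else c i) • v i = -(c j • v j) :=
      eq_neg_of_add_eq_zero_left h2.symm
    have hxmem : (c j • v j) ∈ coneSpan v :=
      ⟨fun i => if i = j then c j else 0,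
        fun i => by dsimp only; split <;> [exact hc j; exact le_refl 0], hB.symm⟩
    have hnxmem : -(c j • v j) ∈ coneSpan v :=
      ⟨fun i => if i = j then 0 else c i,
        fun i => by dsimp only; split <;> [exact le_refl 0; exact hc i], h1.symm⟩
    have h0 := hsc _ hxmem hnxmem
    rcases smul_eq_zero.mp h0 with h | h
    · exact h
    · exact absurd h (hvne j)
  obtain ⟨φ0, hφ0⟩ := exists_pos_functional v hpi
  -- positivity of φ0 on the cone
  have hφpos : ∀ y ∈ coneSpan v, y ≠ 0 → 0 < φ0 y := by
    rintro y ⟨c, hc, rfl⟩ hy0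
    have heq : φ0 (∑ i, c i • v i) = ∑ i, c i * φ0 (v i) := by
      rw [map_sum]
      apply Finset.sum_congr rfl
      intro i _
      rw [map_smul, smul_eq_mul]
    have hterms : ∀ i ∈ Finset.univ, 0 ≤ c i * φ0 (v i) :=
      fun i _ => mul_nonneg (hc i) (le_of_lt (hφ0 i))
    rw [heq]
    rcases lt_or_eq_of_le (Finset.sum_nonneg hterms) with h | h
    · exact h
    · exfalso
      apply hy0
      have hall := (Finset.sum_eq_zero_iff_of_nonneg hterms).mp h.symm
      have : ∀ i ∈ Finset.univ, c i • v i = 0 := by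
        intro i hi
        have := hall i hi
        rcases mul_eq_zero.mp this with h' | h'
        · rw [h', zero_smul]
        · exact absurd h' (ne_of_gt (hφ0 i))
      exact Finset.sum_eq_zero this
  -- integrality denominator
  obtain ⟨mN, sN, hsN⟩ := Module.Finite.exists_fin (R := ℤ) (M := ↥N)
  set d : ℕ := ∏ i, (φ0 ((sN i : V))).den with hd
  have hdpos : 0 < d := Finset.prod_pos fun i _ => (φ0 ((sN i : V))).den_pos
  have hdq : ∀ (q : ℚ), q.den ∣ d → ∃ z : ℤ, (d:ℚ) * q = z := by
    intro q hdvd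
    obtain ⟨c, hc⟩ := hdvd
    refine ⟨q.num * c, ?_⟩
    have hden : (q.den : ℚ) ≠ 0 := by exact_mod_cast q.den_ne_zero
    have h1 : (q.den : ℚ) * q = q.num := by
      rw [mul_comm]
      exact_mod_cast Rat.mul_den_eq_num q
    calc (d:ℚ) * q = ((q.den * c : ℕ) : ℚ) * q := by rw [← hc]
      _ = (c:ℚ) * ((q.den:ℚ) * q) := by push_cast; ring
      _ = (c:ℚ) * q.num := by rw [h1]
      _ = ((q.num * c : ℤ) : ℚ) := by push_cast; ring
  have hint : ∀ y, y ∈ N → ∃ z : ℤ, (d:ℚ) * φ0 y = z := by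
    intro y hy
    have hmem : (⟨y, hy⟩ : ↥N) ∈ Submodule.span ℤ (Set.range sN) := by
      rw [hsN]; exact Submodule.mem_top
    obtain ⟨a, ha⟩ := Submodule.mem_span_range_iff_exists_fun ℤ |>.mp hmem
    have hyv : y = ∑ i, a i • (sN i : V) := by
      calc y = ((⟨y, hy⟩ : ↥N) : V) := rfl
        _ = ((∑ i, a i • sN i : ↥N) : V) := by rw [ha]
        _ = ∑ i, a i • (sN i : V) := by
            rw [Submodule.coe_sum]
            simp
    have hterm : ∀ i, ∃ z : ℤ, (d:ℚ) * φ0 ((sN i : V)) = z := by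
      intro i
      apply hdq
      exact Finset.dvd_prod_of_mem (fun i => (φ0 ((sN i : V))).den) (Finset.mem_univ i)
    choose zf hzf using hterm
    refine ⟨∑ i, a i * zf i, ?_⟩
    have hφy : φ0 y = ∑ i, (a i : ℚ) * φ0 ((sN i : V)) := by
      rw [hyv, map_sum]
      apply Finset.sum_congr rfl
      intro i _
      rw [map_zsmul, zsmul_eq_mul]
    rw [hφy, Finset.mul_sum]
    push_cast
    apply Finset.sum_congr rfl
    intro i _
    rw [← hzf i]
    ring
  -- small vectors are not vertices
  have hsmall_ne_vert : ∀ x' : V, IsSmallVec N v x' → ∀ i, x' ≠ v i := by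
    intro x' hx' i hxi
    exact hx'.2.2.2 i ⟨0, cs_zero, N.zero_mem, by rw [hxi, add_zero]⟩
  -- main induction on the size
  have main : ∀ n : ℕ, ∀ x' : V, IsSmallVec N v x' → (d:ℚ) * φ0 x' ≤ (n:ℚ) →
      x' ∈ AddSubmonoid.closure {y : V | IsMinimalVec N v y} := by
    intro n
    induction n using Nat.strong_induction_on with
    | _ n ih =>
      intro x' hx' hle
      obtain ⟨hxc, hxN, hxne, hxsum⟩ := hx'
      by_cases hdec : ∃ y z : V, y ∈ coneSpan v ∧ y ∈ N ∧ y ≠ 0 ∧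
          z ∈ coneSpan v ∧ z ∈ N ∧ z ≠ 0 ∧ x' = y + z
      · obtain ⟨y, z, hyc, hyN, hyne, hzc, hzN, hzne, rfl⟩ := hdec
        have hysmall : IsSmallVec N v y := by
          refine ⟨hyc, hyN, hyne, ?_⟩
          rintro i ⟨t, htc, htN, hyt⟩
          exact hxsum i ⟨t + z, cs_add htc hzc, N.add_mem htN hzN, by rw [hyt]; abel⟩
        have hzsmall : IsSmallVec N v z := by
          refine ⟨hzc, hzN, hzne, ?_⟩
          rintro i ⟨t, htc, htN, hzt⟩
          exact hxsum i ⟨t + y, cs_add htc hyc, N.add_mem htN hyN, by rw [hzt]; abel⟩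
        obtain ⟨zy, hzy⟩ := hint y hyN
        obtain ⟨zz, hzz⟩ := hint z hzN
        have hzy1 : (1:ℚ) ≤ (zy:ℚ) := by
          have h := mul_pos (by exact_mod_cast hdpos : (0:ℚ) < (d:ℚ)) (hφpos y hyc hyne)
          rw [hzy] at h
          exact_mod_cast (by exact_mod_cast h : (0:ℤ) < zy)
        have hzz1 : (1:ℚ) ≤ (zz:ℚ) := by
          have h := mul_pos (by exact_mod_cast hdpos : (0:ℚ) < (d:ℚ)) (hφpos z hzc hzne)
          rw [hzz] at h
          exact_mod_cast (by exact_mod_cast h : (0:ℤ) < zz)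
        have hsum : (zy:ℚ) + (zz:ℚ) ≤ (n:ℚ) := by
          have heq : (d:ℚ) * φ0 (y + z) = (d:ℚ) * φ0 y + (d:ℚ) * φ0 z := by
            rw [map_add]; ring
          rw [heq, hzy, hzz] at hle
          exact hle
        have hn1 : 1 ≤ n := by
          by_contra h
          push_neg at h
          interval_cases n
          · simp only [Nat.cast_zero] at hsum
            linarith
        have hcast : ((n - 1 : ℕ) : ℚ) = (n:ℚ) - 1 := by
          push_cast [Nat.cast_sub hn1]
          ring
        have hylt : (d:ℚ) * φ0 y ≤ ((n - 1 : ℕ) : ℚ) := by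
          rw [hzy, hcast]; linarith
        have hzlt : (d:ℚ) * φ0 z ≤ ((n - 1 : ℕ) : ℚ) := by
          rw [hzz, hcast]; linarith
        have hlt : n - 1 < n := Nat.sub_lt (lt_of_lt_of_le one_pos hn1) one_pos
        exact AddSubmonoid.add_mem _ (ih (n-1) hlt y hysmall hylt)
          (ih (n-1) hlt z hzsmall hzlt)
      · apply AddSubmonoid.subset_closure
        exact ⟨hxc, hxN, hxne,
          hsmall_ne_vert x' ⟨hxc, hxN, hxne, hxsum⟩, hdec⟩
  obtain ⟨zx, hzx⟩ := hint x hx.2.1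
  have hzx0 : 0 ≤ zx := by
    have h := mul_nonneg (by exact_mod_cast le_of_lt hdpos : (0:ℚ) ≤ (d:ℚ))
      (le_of_lt (hφpos x hx.1 hx.2.2.1))
    rw [hzx] at h
    exact_mod_cast h
  apply main zx.toNat x hx
  rw [hzx]
  have : ((zx.toNat : ℕ) : ℚ) = (zx : ℚ) := by
    rw [← Int.cast_natCast]
    congr 1
    exact Int.toNat_of_nonneg hzx0
  rw [this]
end

section
/- Let σ = ⟨v₁,…,v_k⟩ be a strictly convex finitely generated cone in a lattice N. Then every integral vector of σ (i.e., every element of σ ∩ N) is a nonnegative integral combination of minimal vectors and vertices of σ; that is, the monoid σ ∩ N is generated by the vertices of σ together with the minimal vectors of σ. -/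
universe u

namespace ConeAux

variable {V : Type u} [AddCommGroup V] [Module ℚ V]

lemma zero_mem_coneSpan {k : ℕ} (v : Fin k → V) : (0 : V) ∈ coneSpan v :=
  ⟨0, fun _ => le_rfl, by simp⟩

lemma add_mem_coneSpan {k : ℕ} {v : Fin k → V} {x y : V}
    (hx : x ∈ coneSpan v) (hy : y ∈ coneSpan v) : x + y ∈ coneSpan v := by
  obtain ⟨c, hc, rfl⟩ := hx
  obtain ⟨d, hd, rfl⟩ := hy
  exact ⟨c + d, fun i => add_nonneg (hc i) (hd i), by
    simp [add_smul, Finset.sum_add_distrib]⟩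

lemma generator_mem_coneSpan {k : ℕ} (v : Fin k → V) (i : Fin k) : v i ∈ coneSpan v := by
  refine ⟨fun j => if j = i then 1 else 0, fun j => by positivity, ?_⟩
  simp [ite_smul]

/-- Farkas lemma over ℚ, by induction on the number of generators. -/
lemma farkas : ∀ (k : ℕ) (v : Fin k → V) (b : V), b ∉ coneSpan v →
    ∃ φ : V →ₗ[ℚ] ℚ, (∀ i, 0 ≤ φ (v i)) ∧ φ b < 0 := by
  intro k
  induction k with
  | zero =>
    intro v b hb
    have hb0 : b ≠ 0 := fun h => hb (h ▸ zero_mem_coneSpan v)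
    have : ¬ ∀ φ : Module.Dual ℚ V, φ b = 0 := by
      rw [Module.forall_dual_apply_eq_zero_iff]; exact hb0
    push_neg at this
    obtain ⟨φ, hφ⟩ := this
    refine ⟨(-(φ b)⁻¹) • φ, fun i => i.elim0, ?_⟩
    simp only [LinearMap.smul_apply, smul_eq_mul]
    rw [neg_mul, inv_mul_cancel₀ hφ]
    norm_num
  | succ k ih =>
    intro v b hb
    set vk := v (Fin.last k) with hvk
    set w : Fin k → V := Fin.init v with hw
    have hsnoc_sum : ∀ (c : Fin k → ℚ) (T : ℚ),
        ∑ i, (Fin.snoc c T : Fin (k+1) → ℚ) i • v i = (∑ i, c i • w i) + T • vk := by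
      intro c T
      rw [Fin.sum_univ_castSucc]
      simp [hw, Fin.init, Fin.snoc_castSucc, hvk]
    have hsub : coneSpan w ⊆ coneSpan v := by
      rintro x ⟨c, hc, rfl⟩
      refine ⟨Fin.snoc c 0, ?_, by rw [hsnoc_sum]; simp⟩
      intro i
      refine Fin.lastCases ?_ ?_ i
      · simp
      · intro j; simpa using hc j
    obtain ⟨φ, hφw, hφb⟩ := ih w b (fun h => hb (hsub h))
    by_cases hk : 0 ≤ φ vk
    · refine ⟨φ, ?_, hφb⟩
      intro i
      refine Fin.lastCases ?_ ?_ i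
      · exact hk
      · intro j; exact hφw j
    · push_neg at hk
      have hφvk : φ vk ≠ 0 := ne_of_lt hk
      set s : Fin k → ℚ := fun i => -(φ (w i)) / φ vk with hs
      have hs_nonneg : ∀ i, 0 ≤ s i := by
        intro i
        rcases eq_or_lt_of_le (hφw i) with h | h
        · simp [hs, ← h]
        · exact le_of_lt (div_pos_of_neg_of_neg (neg_neg_iff_pos.2 h) hk)
      set t : ℚ := φ b / φ vk with ht
      have ht_pos : 0 < t := div_pos_of_neg_of_neg hφb hk
      set u : Fin k → V := fun i => w i + s i • vk with hu
      set b' : V := b - t • vk with hb'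
      have hb'' : b' ∉ coneSpan u := by
        rintro ⟨c, hc, hcb⟩
        apply hb
        refine ⟨Fin.snoc c ((∑ i, c i * s i) + t), ?_, ?_⟩
        · intro i
          refine Fin.lastCases ?_ ?_ i
          · simp only [Fin.snoc_last]
            exact add_nonneg (Finset.sum_nonneg fun i _ =>
              mul_nonneg (hc i) (hs_nonneg i)) (le_of_lt ht_pos)
          · intro j; simpa using hc j
        · rw [hsnoc_sum]
          have : b = b' + t • vk := by rw [hb']; abel
          rw [this, hcb]
          simp only [hu, smul_add, Finset.sum_add_distrib, smul_smul, add_smul,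
            Finset.sum_smul]
          abel
      obtain ⟨ψ, hψu, hψb'⟩ := ih u b' hb''
      refine ⟨ψ - (ψ vk / φ vk) • φ, ?_, ?_⟩
      · intro i
        refine Fin.lastCases ?_ ?_ i
        · simp only [LinearMap.sub_apply, LinearMap.smul_apply, smul_eq_mul]
          rw [div_mul_cancel₀ _ hφvk]
          simp [hvk]
        · intro j
          have h1 := hψu j
          simp only [hu, map_add, map_smul, smul_eq_mul, hs] at h1
          simp only [LinearMap.sub_apply, LinearMap.smul_apply, smul_eq_mul]
          have hwj : v j.castSucc = w j := rfl
          rw [hwj]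
          calc ψ (w j) - ψ vk / φ vk * φ (w j)
              = ψ (w j) + -(φ (w j)) / φ vk * ψ vk := by
                field_simp
                ring
            _ ≥ 0 := h1
      · have : ψ b' = ψ b - t * ψ vk := by
          rw [hb']; simp [map_sub, map_smul, smul_eq_mul]
        simp only [LinearMap.sub_apply, LinearMap.smul_apply, smul_eq_mul]
        calc ψ b - ψ vk / φ vk * φ b = ψ b - t * ψ vk := by rw [ht]; ring
          _ = ψ b' := this.symm
          _ < 0 := hψb'

/-- Gordan: a strictly convex cone with nonzero generators admits a strictly positive
functional. -/
lemma gordan {k : ℕ} (v : Fin k → V) (hsc : StrictlyConvexCone v)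
    (hne : ∀ i, v i ≠ 0) : ∃ φ : V →ₗ[ℚ] ℚ, ∀ i, 0 < φ (v i) := by
  set v' : Fin k → V × ℚ := fun i => (v i, 1) with hv'
  have hb : ((0 : V), (1 : ℚ)) ∉ coneSpan v' := by
    rintro ⟨c, hc, hcb⟩
    have hfst : (0 : V) = ∑ i, c i • v i := by
      have := congrArg Prod.fst hcb
      simpa [Prod.fst_sum, hv'] using this
    have hsnd : (1 : ℚ) = ∑ i, c i • (1 : ℚ) := by
      have := congrArg Prod.snd hcb
      simpa [Prod.snd_sum, hv'] using this
    have hcsum : ∑ i, c i = 1 := by simpa [smul_eq_mul] using hsnd.symm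
    have hex : ∃ j, c j ≠ 0 := by
      by_contra hall
      push_neg at hall
      simp [hall] at hcsum
    obtain ⟨j, hj⟩ := hex
    have hx : c j • v j ∈ coneSpan v := by
      refine ⟨fun i => if i = j then c i else 0, fun i => ?_, ?_⟩
      · dsimp only; split
        · exact hc i
        · exact le_rfl
      · simp [ite_smul]
    have hnx : -(c j • v j) ∈ coneSpan v := by
      refine ⟨fun i => if i = j then 0 else c i, fun i => ?_, ?_⟩
      · dsimp only; split
        · exact le_rfl
        · exact hc i
      · have hpt : ∀ i : Fin k, (if i = j then (0:ℚ) else c i) • v i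
            = c i • v i - (if i = j then c i • v i else 0) := by
          intro i; split <;> simp
        rw [Finset.sum_congr rfl (fun i _ => hpt i), Finset.sum_sub_distrib,
          Finset.sum_ite_eq' Finset.univ j (fun i => c i • v i)]
        simp [← hfst]
    have h0 := hsc _ hx hnx
    rcases smul_eq_zero.1 h0 with h | h
    · exact hj h
    · exact hne j h
  obtain ⟨φ', hφ', hφb⟩ := farkas k v' _ hb
  refine ⟨φ'.comp (LinearMap.inl ℚ V ℚ), ?_⟩
  intro i
  have h1 : φ' (v i, 1) = φ' (v i, 0) + φ' (0, 1) := by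
    rw [← map_add]; norm_num
  have h2 := hφ' i
  simp only [hv'] at h2
  rw [h1] at h2
  simp only [LinearMap.comp_apply, LinearMap.inl_apply]
  linarith

/-- Denominator bound: a `ℚ`-valued functional has bounded denominators on a finitely
generated `ℤ`-lattice. -/
lemma denom_bound (N : Submodule ℤ V) [Module.Finite ℤ ↥N] (φ : V →ₗ[ℚ] ℚ) :
    ∃ d : ℕ, 0 < d ∧ ∀ x ∈ N, ∃ m : ℤ, (d : ℚ) * φ x = m := by
  obtain ⟨S, hS⟩ := Module.Finite.fg_top (R := ℤ) (M := ↥N)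
  set d : ℕ := ∏ x ∈ S, (φ (x : V)).den with hd
  have hd0 : 0 < d := Finset.prod_pos fun x _ => (φ (x : V)).pos
  have hd' : (d : ℚ) ≠ 0 := by positivity
  refine ⟨d, hd0, ?_⟩
  set P : Submodule ℤ ℚ := Submodule.span ℤ {((d : ℚ))⁻¹} with hP
  set ψ : ↥N →ₗ[ℤ] ℚ := (φ.restrictScalars ℤ).comp (N.subtype.restrictScalars ℤ) with hψ
  have hgen : (↑S : Set ↥N) ⊆ ↑(P.comap ψ) := by
    intro x hx
    have hxS : x ∈ S := hx
    simp only [SetLike.mem_coe, Submodule.mem_comap, hP, Submodule.mem_span_singleton]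
    have hdvd : (φ (x : V)).den ∣ d := by
      rw [hd]; exact Finset.dvd_prod_of_mem _ hxS
    obtain ⟨e, he⟩ := hdvd
    have he0 : (e : ℚ) ≠ 0 := by
      intro h
      rw [show e = 0 by exact_mod_cast h, mul_zero] at he
      rw [hd] at hd0
      omega
    have hden : ((φ (x : V)).den : ℚ) ≠ 0 := by
      exact_mod_cast (φ (x : V)).den_nz
    refine ⟨(φ (x : V)).num * e, ?_⟩
    have hψx : ψ x = φ (x : V) := rfl
    have hdcast : (d : ℚ) = ((φ (x : V)).den : ℚ) * (e : ℚ) := by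
      exact_mod_cast congrArg (Nat.cast : ℕ → ℚ) he
    have h1 : ((φ (x : V)).den : ℚ) * φ (x : V) = ((φ (x : V)).num : ℚ) := by
      rw [mul_comm]
      exact_mod_cast Rat.mul_den_eq_num (φ (x : V))
    have key : ((φ (x : V)).num : ℚ) * (e : ℚ) = (d : ℚ) * φ (x : V) := by
      calc ((φ (x : V)).num : ℚ) * (e : ℚ)
          = (((φ (x : V)).den : ℚ) * φ (x : V)) * e := by rw [h1]
        _ = (d : ℚ) * φ (x : V) := by rw [hdcast]; ring
    rw [hψx, zsmul_eq_mul]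
    push_cast
    rw [key, mul_comm ((d : ℚ)) (φ (x : V) ), mul_assoc, mul_inv_cancel₀ hd', mul_one]
  have htop : ∀ x : ↥N, ψ x ∈ P := by
    intro x
    have h1 : Submodule.span ℤ (↑S : Set ↥N) ≤ P.comap ψ := Submodule.span_le.2 hgen
    rw [hS] at h1
    exact h1 Submodule.mem_top
  intro x hx
  have := htop ⟨x, hx⟩
  rw [hP, Submodule.mem_span_singleton] at this
  obtain ⟨m, hm⟩ := this
  refine ⟨m, ?_⟩
  have hψx : ψ ⟨x, hx⟩ = φ x := rfl
  rw [hψx] at hm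
  rw [← hm, zsmul_eq_mul]
  field_simp

end ConeAux

/-- The monoid `σ ∩ N` of integral vectors of a strictly convex finitely
generated cone `σ = ⟨v₁,…,v_k⟩` is generated by the vertices together with the minimal
vectors of `σ`. -/
theorem cone_monoid_generated_by_vertices_and_minimal_vectors
    {V : Type u} [AddCommGroup V] [Module ℚ V] (N : Submodule ℤ V) [Module.Finite ℤ ↥N]
    {k : ℕ} (v : Fin k → V)
    (hsc : StrictlyConvexCone v) (hvert : IsVertexFamily N v) :
    (AddSubmonoid.closure (Set.range v ∪ {y : V | IsMinimalVec N v y}) : Set V)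
      = coneSpan v ∩ (N : Set V) := by
  obtain ⟨hprim, -⟩ := hvert
  have hne : ∀ i, v i ≠ 0 := fun i => (hprim i).2.1
  obtain ⟨φ, hφ⟩ := ConeAux.gordan v hsc hne
  obtain ⟨d, hd0, hint⟩ := ConeAux.denom_bound N φ
  have hpos : ∀ x ∈ coneSpan v, x ≠ 0 → 0 < φ x := by
    rintro x ⟨c, hc, rfl⟩ hx0
    have hsum : φ (∑ i, c i • v i) = ∑ i, c i * φ (v i) := by
      simp [map_sum, map_smul, smul_eq_mul]
    rw [hsum]
    have hterm : ∀ i ∈ Finset.univ, 0 ≤ c i * φ (v i) := fun i _ =>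
      mul_nonneg (hc i) (le_of_lt (hφ i))
    rcases (Finset.sum_nonneg hterm).lt_or_eq with h | h
    · exact h
    · exfalso
      apply hx0
      have hzero := (Finset.sum_eq_zero_iff_of_nonneg hterm).1 h.symm
      have hc0 : ∀ i, c i = 0 := by
        intro i
        have := hzero i (Finset.mem_univ i)
        rcases mul_eq_zero.1 this with h' | h'
        · exact h'
        · exact absurd h' (ne_of_gt (hφ i))
      simp [hc0]
  have hpos1 : ∀ x, x ∈ coneSpan v → x ∈ N → x ≠ 0 → (1 : ℚ) ≤ d * φ x := by
    intro x hx hxN hx0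
    obtain ⟨m, hm⟩ := hint x hxN
    have h0 : (0 : ℚ) < d * φ x := mul_pos (by exact_mod_cast hd0) (hpos x hx hx0)
    rw [hm] at h0 ⊢
    have : (0 : ℤ) < m := by exact_mod_cast h0
    exact_mod_cast this
  apply Set.Subset.antisymm
  · have hle : AddSubmonoid.closure (Set.range v ∪ {y : V | IsMinimalVec N v y}) ≤
        { carrier := coneSpan v ∩ (N : Set V)
          add_mem' := fun ha hb => ⟨ConeAux.add_mem_coneSpan ha.1 hb.1, N.add_mem ha.2 hb.2⟩
          zero_mem' := ⟨ConeAux.zero_mem_coneSpan v, N.zero_mem⟩ } := by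
      rw [AddSubmonoid.closure_le]
      rintro y (⟨i, rfl⟩ | hy)
      · exact ⟨ConeAux.generator_mem_coneSpan v i, (hprim i).1⟩
      · exact ⟨hy.1, hy.2.1⟩
    exact fun x hx => hle hx
  · rintro x ⟨hx, hxN⟩
    have key : ∀ (n : ℕ) (y : V), y ∈ coneSpan v → y ∈ N → (d : ℚ) * φ y ≤ n →
        y ∈ AddSubmonoid.closure (Set.range v ∪ {y : V | IsMinimalVec N v y}) := by
      intro n
      induction n with
      | zero =>
        intro y hy hyN hle
        by_cases hy0 : y = 0
        · subst hy0; exact AddSubmonoid.zero_mem _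
        · have := hpos1 y hy hyN hy0
          norm_num at hle
          linarith
      | succ n IH =>
        intro y hy hyN hle
        by_cases hy0 : y = 0
        · subst hy0; exact AddSubmonoid.zero_mem _
        by_cases hvtx : ∃ i, y = v i
        · obtain ⟨i, rfl⟩ := hvtx
          exact AddSubmonoid.subset_closure (Or.inl ⟨i, rfl⟩)
        by_cases hmin : IsMinimalVec N v y
        · exact AddSubmonoid.subset_closure (Or.inr hmin)
        push_neg at hvtx
        have hdec : ∃ a b : V, a ∈ coneSpan v ∧ a ∈ N ∧ a ≠ 0 ∧
            b ∈ coneSpan v ∧ b ∈ N ∧ b ≠ 0 ∧ y = a + b := by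
          by_contra hE
          exact hmin ⟨hy, hyN, hy0, hvtx, hE⟩
        obtain ⟨a, b, ha, haN, ha0, hb, hbN, hb0, rfl⟩ := hdec
        have h1 := hpos1 a ha haN ha0
        have h2 := hpos1 b hb hbN hb0
        have hab : (d : ℚ) * φ (a + b) = d * φ a + d * φ b := by
          rw [map_add]; ring
        rw [hab] at hle
        push_cast at hle
        have ha' : (d : ℚ) * φ a ≤ n := by linarith
        have hb' : (d : ℚ) * φ b ≤ n := by linarith
        exact AddSubmonoid.add_mem _ (IH a ha haN ha') (IH b hb hbN hb')
    obtain ⟨m, hm⟩ := hint x hxN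
    refine key m.toNat x hx hxN ?_
    rw [hm]
    exact_mod_cast Int.self_le_toNat m
end

section
/- Let σ = τ ⊕ ρ be a direct sum decomposition of a strictly convex finitely generated cone σ in a lattice N, meaning N_σ = N_τ ⊕ N_ρ and σ = τ + ρ, where τ and ρ are strictly convex finitely generated cones with τ ⊆ N_τ ⊗ ℚ and ρ ⊆ N_ρ ⊗ ℚ, and ρ is regular. Then every minimal vector of σ and every small vector of σ lies in τ. -/
universe u

section Helpers

variable {V : Type u} [AddCommGroup V] [Module ℚ V]

lemma exists_common_denom {k : ℕ} (c : Fin k → ℚ) :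
    ∃ D : ℤ, 0 < D ∧ ∀ i, ∃ n : ℤ, (D : ℚ) * c i = (n : ℚ) := by
  refine ⟨∏ i, ((c i).den : ℤ), Finset.prod_pos (fun i _ => by exact_mod_cast (c i).den_pos), ?_⟩
  intro i
  obtain ⟨k', hk'⟩ : ((c i).den : ℤ) ∣ ∏ j, ((c j).den : ℤ) :=
    Finset.dvd_prod_of_mem _ (Finset.mem_univ i)
  refine ⟨k' * (c i).num, ?_⟩
  rw [hk']
  push_cast
  rw [mul_comm ((c i).den : ℚ), mul_assoc, mul_comm ((c i).den : ℚ) (c i), Rat.mul_den_eq_num]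

lemma smul_int_rat (z : ℤ) (w : V) :
    z • w = (z : ℚ) • w := (Int.cast_smul_eq_zsmul ℚ z w).symm

lemma span_rat_scale (N : Submodule ℤ V)
    {k : ℕ} (g : Fin k → V) (hg : ∀ i, g i ∈ N) {p : V}
    (hp : p ∈ Submodule.span ℚ (Set.range g)) :
    ∃ D : ℤ, 0 < D ∧ D • p ∈ N := by
  obtain ⟨c, hc⟩ := (Submodule.mem_span_range_iff_exists_fun ℚ).mp hp
  obtain ⟨D, hD, hn⟩ := exists_common_denom c
  choose n hn using hn
  refine ⟨D, hD, ?_⟩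
  have : D • p = ∑ i, n i • g i := by
    rw [← hc, Finset.smul_sum]
    refine Finset.sum_congr rfl fun i _ => ?_
    rw [smul_int_rat, smul_int_rat, smul_smul, hn]
  rw [this]
  exact Submodule.sum_smul_mem N n fun i _ => hg i

lemma coords_integral (N : Submodule ℤ V)
    {l : ℕ} (r : Fin l → V) (hreg : IsRegularCone N r)
    (q : Fin l → ℚ) (h : (∑ j, q j • r j) ∈ N) : ∀ j, ∃ e : ℤ, q j = (e : ℚ) := by
  classical
  obtain ⟨ι, b, f, hf, hb⟩ := hreg
  obtain ⟨D, hD, hn⟩ := exists_common_denom q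
  choose n hn using hn
  set W : ↥N := ⟨∑ j, q j • r j, h⟩ with hW
  have hDW : D • W = ∑ j, n j • b (f j) := by
    apply Subtype.ext
    have h1 : ((D • W : ↥N) : V) = D • (∑ j, q j • r j) := rfl
    have h2 : ((∑ j, n j • b (f j) : ↥N) : V) = ∑ j, n j • r j := by
      show N.subtype (∑ j, n j • b (f j)) = _
      rw [map_sum]
      exact Finset.sum_congr rfl fun j _ => by rw [map_zsmul]; simp [hb]
    rw [h1, h2, Finset.smul_sum]
    refine Finset.sum_congr rfl fun j _ => ?_
    rw [smul_int_rat, smul_int_rat, smul_smul, hn]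
  intro j0
  refine ⟨b.repr W (f j0), ?_⟩
  have h1 : b.repr (D • W) (f j0) = D * b.repr W (f j0) := by
    rw [map_smul]; rfl
  have h2 : b.repr (∑ j, n j • b (f j)) (f j0) = n j0 := by
    rw [map_sum, Finsupp.finset_sum_apply]
    have hterm : ∀ j ∈ Finset.univ, (b.repr (n j • b (f j))) (f j0)
        = if j = j0 then n j0 else 0 := by
      intro j _
      have heq : (f j = f j0) ↔ (j = j0) := hf.eq_iff
      rw [map_smul, Module.Basis.repr_self, Finsupp.smul_apply, Finsupp.single_apply,
        if_congr heq rfl rfl]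
      by_cases hj : j = j0 <;> simp [hj]
    rw [Finset.sum_congr rfl hterm, Finset.sum_ite_eq' Finset.univ j0]
    simp
  have h3 : D * (b.repr W (f j0)) = n j0 := by rw [← h1, hDW, h2]
  have h4 : (D : ℚ) * q j0 = (D : ℚ) * ((b.repr W (f j0) : ℤ) : ℚ) := by
    rw [hn j0, ← h3]; push_cast; ring
  exact mul_left_cancel₀ (by exact_mod_cast hD.ne') h4

lemma span_disjoint_zero (N : Submodule ℤ V)
    {m l : ℕ} (t : Fin m → V) (r : Fin l → V)
    (ht : ∀ i, t i ∈ N) (hr : ∀ j, r j ∈ N)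
    (hdisj : Disjoint (latticeOf N t) (latticeOf N r)) {p : V}
    (h1 : p ∈ Submodule.span ℚ (Set.range t)) (h2 : p ∈ Submodule.span ℚ (Set.range r)) :
    p = 0 := by
  obtain ⟨D1, hD1, hm1⟩ := span_rat_scale N t ht h1
  obtain ⟨D2, hD2, hm2⟩ := span_rat_scale N r hr h2
  have hsm1 : (D1 * D2) • p ∈ Submodule.span ℚ (Set.range t) := by
    rw [smul_int_rat]; exact Submodule.smul_mem _ _ h1
  have hsm2 : (D1 * D2) • p ∈ Submodule.span ℚ (Set.range r) := by
    rw [smul_int_rat]; exact Submodule.smul_mem _ _ h2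
  have hN : (D1 * D2) • p ∈ N := by
    rw [mul_comm, mul_smul]; exact Submodule.smul_mem N D2 hm1
  have hz : (D1 * D2) • p = 0 :=
    Submodule.disjoint_def.mp hdisj _ (Submodule.mem_inf.mpr ⟨hN, hsm1⟩)
      (Submodule.mem_inf.mpr ⟨hN, hsm2⟩)
  rw [smul_int_rat] at hz
  have hne : ((D1 * D2 : ℤ) : ℚ) ≠ 0 := by exact_mod_cast (mul_pos hD1 hD2).ne'
  exact (smul_eq_zero.mp hz).resolve_left hne

lemma gen_mem_coneSpan {k : ℕ} (v : Fin k → V) (i0 : Fin k) : v i0 ∈ coneSpan v := by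
  classical
  refine ⟨fun i => if i = i0 then 1 else 0, fun i => by dsimp only; split <;> norm_num, ?_⟩
  rw [show (∑ i, (if i = i0 then (1:ℚ) else 0) • v i)
      = ∑ i, (if i = i0 then v i else 0) from
    Finset.sum_congr rfl fun i _ => by split <;> simp]
  rw [Finset.sum_ite_eq' Finset.univ i0]
  simp

end Helpers

/-- If `σ = τ ⊕ ρ` is a direct sum decomposition of a strictly convex
finitely generated cone (so `σ = τ + ρ` and `N_σ = N_τ ⊕ N_ρ`) with `ρ` regular, then every
minimal vector and every small vector of `σ` lies in `τ`. -/
theorem minimal_and_small_vectors_lie_in_first_factor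
    {V : Type u} [AddCommGroup V] [Module ℚ V] (N : Submodule ℤ V) [Module.Finite ℤ ↥N]
    {m l : ℕ} (t : Fin m → V) (r : Fin l → V)
    (hsc : StrictlyConvexCone (Fin.append t r))
    (hvert : IsVertexFamily N (Fin.append t r))
    (hsup : latticeOf N (Fin.append t r) = latticeOf N t ⊔ latticeOf N r)
    (hdisj : Disjoint (latticeOf N t) (latticeOf N r))
    (hreg : IsRegularCone N r)
    (x : V) :
    (IsMinimalVec N (Fin.append t r) x → x ∈ coneSpan t)
      ∧ (IsSmallVec N (Fin.append t r) x → x ∈ coneSpan t)  := by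
  classical
  have htN : ∀ i, t i ∈ N := fun i => by
    have h := (hvert.1 (Fin.castAdd l i)).1; rwa [Fin.append_left] at h
  have hrN : ∀ j, r j ∈ N := fun j => by
    have h := (hvert.1 (Fin.natAdd m j)).1; rwa [Fin.append_right] at h
  have hrne : ∀ j, r j ≠ 0 := fun j => by
    have h := (hvert.1 (Fin.natAdd m j)).2.1; rwa [Fin.append_right] at h
  have key : ∀ y, y ∈ coneSpan (Fin.append t r) → y ∈ N →
      y ∈ coneSpan t ∨ ∃ j, y - r j ∈ coneSpan (Fin.append t r) := by
    intro y hy hyN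
    obtain ⟨e, he0, hesum⟩ := hy
    set c : Fin m → ℚ := fun i => e (Fin.castAdd l i) with hc
    set d : Fin l → ℚ := fun j => e (Fin.natAdd m j) with hd
    have hxsplit : y = (∑ i, c i • t i) + ∑ j, d j • r j := by
      rw [hesum, Fin.sum_univ_add]
      simp [hc, hd, Fin.append_left, Fin.append_right]
    have htspan : (∑ i, c i • t i) ∈ Submodule.span ℚ (Set.range t) :=
      Submodule.sum_smul_mem _ c fun i _ => Submodule.subset_span ⟨i, rfl⟩
    have hrspan : (∑ j, d j • r j) ∈ Submodule.span ℚ (Set.range r) :=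
      Submodule.sum_smul_mem _ d fun j _ => Submodule.subset_span ⟨j, rfl⟩
    have hyspan : y ∈ Submodule.span ℚ (Set.range (Fin.append t r)) :=
      (Submodule.mem_span_range_iff_exists_fun ℚ).mpr ⟨e, hesum.symm⟩
    have hxlat : y ∈ latticeOf N (Fin.append t r) := Submodule.mem_inf.mpr ⟨hyN, hyspan⟩
    rw [hsup] at hxlat
    obtain ⟨u, hu, w, hw, huw⟩ := Submodule.mem_sup.mp hxlat
    obtain ⟨huN, huS⟩ := Submodule.mem_inf.mp hu
    obtain ⟨hwN, hwS⟩ := Submodule.mem_inf.mp hw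
    have hdiff : (∑ i, c i • t i) - u = w - ∑ j, d j • r j := by
      rw [sub_eq_sub_iff_add_eq_add]
      rw [show (∑ i, c i • t i) + ∑ j, d j • r j = u + w from by rw [← hxsplit, huw],
        add_comm]
    have hzero : (∑ i, c i • t i) - u = 0 := by
      refine span_disjoint_zero N t r htN hrN hdisj (Submodule.sub_mem _ htspan huS) ?_
      rw [hdiff]
      exact Submodule.sub_mem _ hwS hrspan
    have hSrw : (∑ j, d j • r j) = w := by
      rw [hzero] at hdiff
      exact (sub_eq_zero.mp hdiff.symm).symm
    have hSrN : (∑ j, d j • r j) ∈ N := hSrw ▸ hwN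
    have hint := coords_integral N r hreg d hSrN
    by_cases hall : ∀ j, d j = 0
    · left
      exact ⟨c, fun i => he0 _, by rw [hxsplit]; simp [hall]⟩
    · right
      push_neg at hall
      obtain ⟨j0, hj0⟩ := hall
      obtain ⟨n0, hn0⟩ := hint j0
      have h1le : 1 ≤ d j0 := by
        have hpos : 0 < d j0 := lt_of_le_of_ne (he0 _) (Ne.symm hj0)
        rw [hn0] at hpos ⊢
        exact_mod_cast (by exact_mod_cast hpos : (0:ℤ) < n0)
      refine ⟨j0, fun i => e i - if i = Fin.natAdd m j0 then 1 else 0, ?_, ?_⟩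
      · intro i
        dsimp only
        by_cases hi : i = Fin.natAdd m j0
        · rw [if_pos hi, hi]
          show (0:ℚ) ≤ d j0 - 1
          linarith
        · simp only [if_neg hi, sub_zero]; exact he0 i
      · have hterm : ∀ i ∈ Finset.univ,
            (e i - if i = Fin.natAdd m j0 then (1:ℚ) else 0) • Fin.append t r i
            = e i • Fin.append t r i
              - (if i = Fin.natAdd m j0 then Fin.append t r i else 0) := by
          intro i _
          rw [sub_smul]
          congr 1
          split <;> simp
        rw [Finset.sum_congr rfl hterm, Finset.sum_sub_distrib, ← hesum,
          Finset.sum_ite_eq' Finset.univ (Fin.natAdd m j0)]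
        simp [Fin.append_right]
  constructor
  · rintro ⟨hx, hxN, hx0, hnv, hnsum⟩
    rcases key x hx hxN with h | ⟨j, hj⟩
    · exact h
    · exfalso
      apply hnsum
      refine ⟨r j, x - r j, ?_, hrN j, hrne j, hj, N.sub_mem hxN (hrN j), ?_, by abel⟩
      · have := gen_mem_coneSpan (Fin.append t r) (Fin.natAdd m j)
        rwa [Fin.append_right] at this
      · intro h0
        apply hnv (Fin.natAdd m j)
        rw [Fin.append_right]
        have := sub_eq_zero.mp h0
        exact this
  · rintro ⟨hx, hxN, hx0, hns⟩
    rcases key x hx hxN with h | ⟨j, hj⟩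
    · exact h
    · exfalso
      refine hns (Fin.natAdd m j) ⟨x - r j, hj, N.sub_mem hxN (hrN j), ?_⟩
      rw [Fin.append_right]
      abel
end

section
/- Let σ = ⟨v₁,…,v_k⟩ be a simplicial cone in a lattice N. If σ has no minimal vectors, then σ is regular: the monoid σ ∩ N_σ is generated by the vertices v₁,…,v_k, and v₁,…,v_k form a ℤ-basis of N_σ. -/
universe u

/-- Any finitely generated `ℤ`-submodule of `ℚ` has a common denominator. -/
lemma myAux_den (M : Submodule ℤ ℚ) (hM : M.FG) :
    ∃ d : ℕ, 0 < d ∧ ∀ q ∈ M, ∃ m : ℤ, (d : ℚ) * q = m := by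
  obtain ⟨S, hS⟩ := hM
  refine ⟨∏ q ∈ S, q.den, Finset.prod_pos (fun q _ => q.pos), ?_⟩
  intro q hq
  rw [← hS] at hq
  induction hq using Submodule.span_induction with
  | mem x hx =>
      obtain ⟨e, he⟩ := Finset.dvd_prod_of_mem (fun q : ℚ => q.den) hx
      refine ⟨e * x.num, ?_⟩
      push_cast [he]
      linear_combination (e : ℚ) * Rat.mul_den_eq_num x
  | zero => exact ⟨0, by simp⟩
  | add x y _ _ hx hy =>
      obtain ⟨m, hm⟩ := hx; obtain ⟨n, hn⟩ := hy
      exact ⟨m + n, by rw [mul_add, hm, hn]; push_cast; ring⟩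
  | smul a x _ hx =>
      obtain ⟨m, hm⟩ := hx
      exact ⟨a * m, by rw [zsmul_eq_mul, mul_left_comm, hm]; push_cast; ring⟩

/-- A simplicial cone `σ = ⟨v₁,…,v_k⟩` with no minimal vectors is regular:
the monoid `σ ∩ N_σ` is generated by the vertices, and `v₁,…,v_k` form a `ℤ`-basis of
`N_σ`. -/
theorem regular_of_no_minimal_vectors
    {V : Type u} [AddCommGroup V] [Module ℚ V] (N : Submodule ℤ V) [Module.Finite ℤ ↥N]
    {k : ℕ} (v : Fin k → V)
    (hind : LinearIndependent ℚ v) (hprim : ∀ i, IsPrimitive N (v i))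
    (hnomin : ∀ x : V, ¬ IsMinimalVec N v x) :
    ((AddSubmonoid.closure (Set.range v) : Set V) = coneSpan v ∩ (N : Set V))
      ∧ ∃ b : Module.Basis (Fin k) ℤ ↥(latticeOf N v), ∀ i, (b i : V) = v i := by
  classical
  have hvinj : Function.Injective v := hind.injective
  have hconespan : ∀ x ∈ coneSpan v, x ∈ Submodule.span ℚ (Set.range v) := by
    rintro x ⟨c, hc, rfl⟩
    exact Submodule.sum_mem _ fun i _ => Submodule.smul_mem _ _ (Submodule.subset_span ⟨i, rfl⟩)
  -- coordinate functionals
  have hsub := (linearIndepOn_id_range_iff hind.injective).mpr hind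
  set B := Module.Basis.extend hsub with hB
  have hmem : ∀ i, v i ∈ hsub.extend (Set.subset_univ _) := fun i =>
    hsub.subset_extend _ ⟨i, rfl⟩
  set φ : Fin k → (V →ₗ[ℚ] ℚ) := fun i => B.coord ⟨v i, hmem i⟩ with hφdef
  have hφ : ∀ i j, φ i (v j) = if j = i then 1 else 0 := by
    intro i j
    have hvj : v j = B ⟨v j, hmem j⟩ := by
      rw [hB]; exact (Module.Basis.extend_apply_self hsub ⟨v j, hmem j⟩).symm
    rw [hφdef]
    dsimp only
    rw [hvj, Module.Basis.coord_apply, B.repr_self, Finsupp.single_apply]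
    by_cases h : j = i
    · rw [if_pos h, if_pos (by exact Subtype.ext (congrArg v h))]
    · rw [if_neg h, if_neg]
      intro hc
      exact h (hvinj (congrArg Subtype.val hc))
  have hcoeff : ∀ (c : Fin k → ℚ) (j : Fin k), φ j (∑ i, c i • v i) = c j := by
    intro c j
    rw [map_sum]
    simp only [map_smul, hφ, smul_eq_mul, mul_ite, mul_one, mul_zero]
    simp [Finset.sum_ite_eq']
  set s : V →ₗ[ℚ] ℚ := ∑ i, φ i with hsdef
  have hsval : ∀ c : Fin k → ℚ, s (∑ i, c i • v i) = ∑ i, c i := by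
    intro c
    rw [hsdef, LinearMap.sum_apply]
    exact Finset.sum_congr rfl fun j _ => hcoeff c j
  -- the lattice is finitely generated
  have hlatle : latticeOf N v ≤ N := inf_le_left
  have hfg : (latticeOf N v).FG := by
    have h1 : (Submodule.comap N.subtype (latticeOf N v)).FG := IsNoetherian.noetherian _
    have h2 := h1.map N.subtype
    rwa [Submodule.map_comap_subtype, inf_eq_right.mpr hlatle] at h2
  obtain ⟨d, hd0, hden⟩ := myAux_den ((latticeOf N v).map (s.restrictScalars ℤ)) (hfg.map _)
  have hd0' : (0:ℚ) < d := by exact_mod_cast hd0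
  have hmemlat : ∀ x, x ∈ coneSpan v → x ∈ N → x ∈ latticeOf N v := fun x hx hxN =>
    Submodule.mem_inf.mpr ⟨hxN, hconespan x hx⟩
  -- positivity of the measure on nonzero lattice points of the cone
  have hpos : ∀ x, x ∈ coneSpan v → x ∈ N → x ≠ 0 → 1 ≤ (d:ℚ) * s x := by
    intro x hx hxN hx0
    have hxl := hmemlat x hx hxN
    obtain ⟨m, hm⟩ := hden (s x) ⟨x, hxl, rfl⟩
    obtain ⟨c, hc, rfl⟩ := hx
    have hsx : s (∑ i, c i • v i) = ∑ i, c i := hsval c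
    have hnn : 0 ≤ ∑ i, c i := Finset.sum_nonneg fun i _ => hc i
    have hne : ∑ i, c i ≠ 0 := by
      intro h0
      apply hx0
      have : ∀ i ∈ Finset.univ, c i = 0 :=
        (Finset.sum_eq_zero_iff_of_nonneg (fun i _ => hc i)).mp h0
      exact Finset.sum_eq_zero fun i hi => by rw [this i hi, zero_smul]
    have hgt : 0 < (d:ℚ) * s (∑ i, c i • v i) := by
      rw [hsx]; exact mul_pos hd0' (lt_of_le_of_ne hnn (Ne.symm hne))
    have hm1 : (1:ℤ) ≤ m := by
      have : (0:ℚ) < m := hm ▸ hgt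
      exact_mod_cast this
    calc (1:ℚ) ≤ m := by exact_mod_cast hm1
    _ = (d:ℚ) * s (∑ i, c i • v i) := hm.symm
  -- main induction
  have main : ∀ n : ℕ, ∀ x, x ∈ coneSpan v → x ∈ N → (d:ℚ) * s x ≤ n →
      x ∈ AddSubmonoid.closure (Set.range v) := by
    intro n
    induction n with
    | zero =>
        intro x hx hxN hle
        have hx0 : x = 0 := by
          by_contra h0
          have := hpos x hx hxN h0
          norm_num at hle
          linarith
        rw [hx0]; exact zero_mem _
    | succ n ih =>
        intro x hx hxN hle
        by_cases hx0 : x = 0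
        · rw [hx0]; exact zero_mem _
        by_cases hvx : ∃ i, x = v i
        · obtain ⟨i, rfl⟩ := hvx; exact AddSubmonoid.subset_closure ⟨i, rfl⟩
        have hdecomp : ∃ y z : V, y ∈ coneSpan v ∧ y ∈ N ∧ y ≠ 0 ∧
            z ∈ coneSpan v ∧ z ∈ N ∧ z ≠ 0 ∧ x = y + z := by
          by_contra hno
          exact hnomin x ⟨hx, hxN, hx0, fun i hi => hvx ⟨i, hi⟩, hno⟩
        obtain ⟨y, z, hy, hyN, hy0, hz, hzN, hz0, rfl⟩ := hdecomp
        have h1 := hpos y hy hyN hy0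
        have h2 := hpos z hz hzN hz0
        have hsadd : s (y + z) = s y + s z := map_add s y z
        rw [hsadd, mul_add] at hle
        push_cast at hle
        have hy' : (d:ℚ) * s y ≤ n := by linarith
        have hz' : (d:ℚ) * s z ≤ n := by linarith
        have hyc := hmemlat y hy hyN
        have hzc := hmemlat z hz hzN
        exact add_mem (ih y hy hyN hy') (ih z hz hzN hz')
  -- the monoid equality
  let S : AddSubmonoid V :=
    { carrier := coneSpan v ∩ (N : Set V)
      add_mem' := by
        rintro a b ⟨⟨c, hc, rfl⟩, haN⟩ ⟨⟨c', hc', rfl⟩, hbN⟩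
        refine ⟨⟨c + c', fun i => add_nonneg (hc i) (hc' i), ?_⟩, N.add_mem haN hbN⟩
        simp [add_smul, Finset.sum_add_distrib]
      zero_mem' := ⟨⟨0, fun i => le_rfl, by simp⟩, N.zero_mem⟩ }
  have hclosure : (AddSubmonoid.closure (Set.range v) : Set V) = coneSpan v ∩ (N : Set V) := by
    apply Set.Subset.antisymm
    · intro x hx
      exact (AddSubmonoid.closure_le (S := S)).mpr
        (by rintro y ⟨i, rfl⟩; exact ⟨⟨fun j => if j = i then 1 else 0,
          fun j => by dsimp only; split <;> norm_num, by simp [ite_smul]⟩, (hprim i).1⟩) hx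
    · rintro x ⟨hx1, hx2⟩
      exact main ⌈(d:ℚ) * s x⌉₊ x hx1 hx2 (Nat.le_ceil _)
  refine ⟨hclosure, ?_⟩
  -- the basis
  have hvlat : ∀ i, v i ∈ latticeOf N v := fun i =>
    Submodule.mem_inf.mpr ⟨(hprim i).1, Submodule.subset_span ⟨i, rfl⟩⟩
  have hZspan : ∀ x ∈ latticeOf N v, x ∈ Submodule.span ℤ (Set.range v) := by
    intro x hxl
    have hxN : x ∈ N := hxl.1
    have hxsp : x ∈ Submodule.span ℚ (Set.range v) := hxl.2
    obtain ⟨c, hc⟩ := (Submodule.mem_span_range_iff_exists_fun ℚ).mp hxsp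
    set M : ℕ := ∑ i, ⌈|c i|⌉₊ with hM
    have hMc : ∀ i, 0 ≤ c i + M := by
      intro i
      have h1 : |c i| ≤ (M:ℚ) := by
        calc |c i| ≤ (⌈|c i|⌉₊ : ℚ) := Nat.le_ceil _
        _ ≤ M := by
          exact_mod_cast Nat.cast_le.mpr (Finset.single_le_sum
            (f := fun i => ⌈|c i|⌉₊) (fun i _ => Nat.zero_le _) (Finset.mem_univ i))
      have := neg_abs_le (c i)
      linarith
    have hsmul : (M:ℚ) • (∑ i, v i) = (M:ℤ) • (∑ i, v i) := by
      rw [← Int.cast_smul_eq_zsmul ℚ]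
      norm_num
    have hy : x + (M:ℚ) • (∑ i, v i) ∈ coneSpan v := by
      refine ⟨fun i => c i + M, hMc, ?_⟩
      simp only [add_smul, Finset.sum_add_distrib, hc, Finset.smul_sum]
    have hsumN : (∑ i, v i) ∈ N := Submodule.sum_mem _ fun i _ => (hprim i).1
    have hyN : x + (M:ℚ) • (∑ i, v i) ∈ N := by
      rw [hsmul]
      exact N.add_mem hxN (N.smul_mem _ hsumN)
    have hyc : x + (M:ℚ) • (∑ i, v i) ∈ AddSubmonoid.closure (Set.range v) := by
      rw [← SetLike.mem_coe, hclosure]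
      exact ⟨hy, hyN⟩
    have hyZ : x + (M:ℚ) • (∑ i, v i) ∈ Submodule.span ℤ (Set.range v) :=
      (AddSubmonoid.closure_le (S := (Submodule.span ℤ (Set.range v)).toAddSubmonoid)).mpr
        Submodule.subset_span hyc
    have hMZ : (M:ℚ) • (∑ i, v i) ∈ Submodule.span ℤ (Set.range v) := by
      rw [hsmul]
      exact Submodule.smul_mem _ _ (Submodule.sum_mem _ fun i _ =>
        Submodule.subset_span ⟨i, rfl⟩)
    have := Submodule.sub_mem _ hyZ hMZ
    simpa using this
  let vL : Fin k → ↥(latticeOf N v) := fun i => ⟨v i, hvlat i⟩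
  have hindZ : LinearIndependent ℤ v := by
    apply LinearIndependent.restrict_scalars (K := ℚ) ?_ hind
    intro a b hab
    have : (a:ℚ) = b := by simpa [zsmul_eq_mul] using hab
    exact_mod_cast this
  have hindL : LinearIndependent ℤ vL := by
    apply LinearIndependent.of_comp (latticeOf N v).subtype
    exact hindZ
  have hspanL : ⊤ ≤ Submodule.span ℤ (Set.range vL) := by
    intro x _
    obtain ⟨f, hf⟩ := (Submodule.mem_span_range_iff_exists_fun ℤ).mp (hZspan x.1 x.2)
    have hx : x = ∑ i, f i • vL i := by
      apply Subtype.ext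
      rw [← hf]
      push_cast
      rfl
    rw [hx]
    exact Submodule.sum_mem _ fun i _ =>
      Submodule.smul_mem _ _ (Submodule.subset_span ⟨i, rfl⟩)
  exact ⟨Module.Basis.mk hindL hspanL, fun i => by rw [Module.Basis.mk_apply]⟩
end

section
/- Let σ = ⟨v₁,…,v_k⟩ be a simplicial cone in a lattice N with det(σ) = n > 1. Then there exists a small vector of σ of the form v = a₁v₁ + … + a_kv_k with 0 ≤ aᵢ < 1 and aᵢ ∈ (1/n)·ℤ≥0 for every i. -/
universe u

theorem exists_small_vector_aux
    {V : Type u} [AddCommGroup V] [Module ℚ V] (N : Submodule ℤ V)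
    {k : ℕ} (v : Fin k → V)
    (hind : LinearIndependent ℚ v) (hprim : ∀ i, IsPrimitive N (v i))
    (hv : ∀ i, v i ∈ latticeOf N v)
    (b : Module.Basis (Fin k) ℤ ↥(latticeOf N v))
    (A : Matrix (Fin k) (Fin k) ℤ)
    (hA : A = Matrix.of fun i j => b.repr ⟨v j, hv j⟩ i)
    (hdet : 1 < A.det.natAbs) :
    ∃ (x : V) (a : Fin k → ℚ), IsSmallVec N v x ∧ x = ∑ i, a i • v i ∧
      ∀ i, 0 ≤ a i ∧ a i < 1 ∧
        ∃ m : ℕ, a i = (m : ℚ) / ((A.det.natAbs : ℕ) : ℚ) := by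
  classical
  set u : Fin k → ↥(latticeOf N v) := fun i => ⟨v i, hv i⟩ with hu
  have hD0 : A.det ≠ 0 := by
    intro h
    rw [h] at hdet
    simp at hdet
  have hDQ0 : ((A.det : ℤ) : ℚ) ≠ 0 := by exact_mod_cast hD0
  -- u is ℤ-linearly independent
  have hvZ : LinearIndependent ℤ v :=
    hind.restrict_scalars (by
      intro a c h
      simpa using h)
  have huind : LinearIndependent ℤ u :=
    LinearIndependent.of_comp (latticeOf N v).subtype (by
      have hcomp : ((latticeOf N v).subtype ∘ u) = v := rfl
      rw [hcomp]; exact hvZ)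
  -- there is a lattice vector outside the ℤ-span of the vertices
  have hspan : Submodule.span ℤ (Set.range u) ≠ ⊤ := by
    intro htop
    let c : Module.Basis (Fin k) ℤ ↥(latticeOf N v) := Module.Basis.mk huind (by rw [htop])
    have hcu : ⇑c = u := Module.Basis.coe_mk _ _
    have hUnit : IsUnit (b.det c) := b.isUnit_det c
    rw [Module.Basis.det_apply] at hUnit
    have hAc : b.toMatrix ⇑c = A := by
      ext i j
      rw [Module.Basis.toMatrix_apply, hcu, hA]
      rfl
    rw [hAc] at hUnit
    rcases Int.isUnit_iff.mp hUnit with h | h <;> rw [h] at hdet <;> simp at hdet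
  obtain ⟨w, hw⟩ : ∃ w : ↥(latticeOf N v), w ∉ Submodule.span ℤ (Set.range u) := by
    by_contra h
    push_neg at h
    exact hspan (eq_top_iff.mpr fun x _ => h x)
  -- Cramer: det A • w is an integral combination of the vertices
  set d : Fin k → ℤ := fun i => b.repr w i with hdd
  set e : Fin k → ℤ := A.adjugate.mulVec d with he
  have hkey : A.det • w = ∑ j, e j • u j := by
    apply b.ext_elem
    intro i
    have h1 : b.repr (∑ j, e j • u j) i = ∑ j, A i j * e j := by
      rw [map_sum, Finsupp.coe_finset_sum, Finset.sum_apply]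
      refine Finset.sum_congr rfl fun j _ => ?_
      rw [map_smul, Finsupp.smul_apply, smul_eq_mul, mul_comm, hA]
      rfl
    have h2 : A.mulVec (A.adjugate.mulVec d) = A.det • d := by
      rw [Matrix.mulVec_mulVec, Matrix.mul_adjugate, Matrix.smul_mulVec,
        Matrix.one_mulVec]
    have h3 : ∑ j, A i j * e j = A.det * d i := by
      have h4 := congrFun h2 i
      simpa [Matrix.mulVec, dotProduct, he] using h4
    rw [h1, h3, map_smul, Finsupp.smul_apply, smul_eq_mul]
  have hkeyV : A.det • (w : V) = ∑ j, e j • v j := by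
    have h5 := congrArg (Subtype.val : ↥(latticeOf N v) → V) hkey
    simpa using h5
  -- rational coordinates of w
  set q : Fin k → ℚ := fun j => (e j : ℚ) / ((A.det : ℤ) : ℚ) with hq
  have hwv : (w : V) = ∑ j, q j • v j := by
    have h3 : ((A.det : ℤ) : ℚ) • (w : V) = ∑ j, (e j : ℚ) • v j := by
      rw [Int.cast_smul_eq_zsmul, hkeyV]
      exact Finset.sum_congr rfl fun j _ => by rw [Int.cast_smul_eq_zsmul]
    have h6 := congrArg (fun y => ((A.det : ℤ) : ℚ)⁻¹ • y) h3
    simp only [inv_smul_smul₀ hDQ0, Finset.smul_sum, smul_smul] at h6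
    rw [h6]
    refine Finset.sum_congr rfl fun j _ => ?_
    congr 1
    rw [hq]
    field_simp
  set a : Fin k → ℚ := fun j => Int.fract (q j) with ha
  set x : V := ∑ j, a j • v j with hx
  have hfl : ∑ j, ((⌊q j⌋ : ℚ)) • v j = ∑ j, (⌊q j⌋ : ℤ) • v j :=
    Finset.sum_congr rfl fun j _ => by rw [Int.cast_smul_eq_zsmul]
  have hxw : x = (w : V) - ∑ j, (⌊q j⌋ : ℤ) • v j := by
    rw [hx, hwv, ← hfl, ← Finset.sum_sub_distrib]
    refine Finset.sum_congr rfl fun j _ => ?_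
    simp only [ha]
    rw [← Int.self_sub_floor, sub_smul]
  have hvN : ∀ i, v i ∈ N := fun i => (hprim i).1
  have hwN : (w : V) ∈ N := w.2.1
  have hxN : x ∈ N := by
    rw [hxw]
    exact Submodule.sub_mem _ hwN (Submodule.sum_mem _ fun j _ =>
      Submodule.smul_mem _ _ (hvN j))
  have hliQ := Fintype.linearIndependent_iff.mp hind
  have hx0 : x ≠ 0 := by
    intro h0
    apply hw
    have hws : (w : V) = ∑ j, (⌊q j⌋ : ℤ) • v j := by
      have h7 : (w : V) - ∑ j, (⌊q j⌋ : ℤ) • v j = 0 := by rw [← hxw, h0]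
      exact sub_eq_zero.mp h7
    have hwsL : w = ∑ j, (⌊q j⌋ : ℤ) • u j := by
      apply Subtype.ext
      rw [hws]
      simp [hu]
    rw [hwsL]
    exact Submodule.sum_mem _ fun j _ =>
      Submodule.smul_mem _ _ (Submodule.subset_span ⟨j, rfl⟩)
  have hanneg : ∀ j, 0 ≤ a j := fun j => Int.fract_nonneg (q j)
  have halt1 : ∀ j, a j < 1 := fun j => Int.fract_lt_one (q j)
  refine ⟨x, a, ⟨⟨a, hanneg, hx⟩, hxN, hx0, ?_⟩, hx, ?_⟩
  · -- smallness
    rintro i ⟨y, ⟨c', hc'0, hy⟩, hyN, hxy⟩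
    have hxc : x = ∑ j, ((if j = i then 1 else 0) + c' j) • v j := by
      rw [hxy, hy]
      rw [Finset.sum_congr rfl fun j (_ : j ∈ Finset.univ) => add_smul _ _ (v j),
        Finset.sum_add_distrib]
      congr 1
      simp
    have hz : ∑ j, (a j - ((if j = i then 1 else 0) + c' j)) • v j = 0 := by
      rw [Finset.sum_congr rfl fun j (_ : j ∈ Finset.univ) => sub_smul _ _ (v j),
        Finset.sum_sub_distrib, ← hx, ← hxc, sub_self]
    have h8 := hliQ _ hz i
    simp only [eq_self_iff_true, if_true] at h8
    have h9 : a i = 1 + c' i := by linarith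
    linarith [halt1 i, hc'0 i]
  · -- coefficients have the right shape
    intro i
    refine ⟨hanneg i, halt1 i, ?_⟩
    set z : ℤ := e i - A.det * ⌊q i⌋ with hzdef
    have haz : a i = (z : ℚ) / ((A.det : ℤ) : ℚ) := by
      simp only [ha]
      rw [← Int.self_sub_floor, hq, hzdef]
      simp only [Int.cast_sub, Int.cast_mul]
      field_simp
      rfl
    refine ⟨z.natAbs, ?_⟩
    have hnD : ((A.det.natAbs : ℕ) : ℚ) = |((A.det : ℤ) : ℚ)| := by
      rw [Nat.cast_natAbs, Int.cast_abs]
    have haD : a i * ((A.det : ℤ) : ℚ) = (z : ℚ) := by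
      rw [haz]
      field_simp
    have habs : a i * |((A.det : ℤ) : ℚ)| = (z.natAbs : ℚ) := by
      rw [Nat.cast_natAbs, Int.cast_abs, ← haD, abs_mul, abs_of_nonneg (hanneg i)]
    have hDabs0 : |((A.det : ℤ) : ℚ)| ≠ 0 := abs_ne_zero.mpr hDQ0
    rw [hnD, eq_div_iff hDabs0, habs]

/-- If a simplicial cone `σ = ⟨v₁,…,v_k⟩` has determinant `n > 1`, then
there exists a small vector of `σ` of the form `∑ aᵢ • vᵢ` with `0 ≤ aᵢ < 1` and
`aᵢ ∈ (1/n)·ℤ≥0` for every `i`. -/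
theorem exists_small_vector_of_one_lt_det
    {V : Type u} [AddCommGroup V] [Module ℚ V] (N : Submodule ℤ V) [Module.Finite ℤ ↥N]
    {k : ℕ} (v : Fin k → V)
    (hind : LinearIndependent ℚ v) (hprim : ∀ i, IsPrimitive N (v i))
    (hv : ∀ i, v i ∈ latticeOf N v)
    (b : Module.Basis (Fin k) ℤ ↥(latticeOf N v))
    (hdet : 1 < (coneDet N v hv b).natAbs) :
    ∃ (x : V) (a : Fin k → ℚ), IsSmallVec N v x ∧ x = ∑ i, a i • v i ∧
      ∀ i, 0 ≤ a i ∧ a i < 1 ∧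
        ∃ m : ℕ, a i = (m : ℚ) / ((coneDet N v hv b).natAbs : ℚ) := by
  exact exists_small_vector_aux N v hind hprim hv b _ rfl hdet
end

section
/- Let σ = ⟨v₁,…,v_s⟩ be a simplicial cone in a lattice N and let v be a minimal vector of σ, written v = a₁v₁ + … + a_sv_s (so that 0 ≤ aᵢ < 1 for all i). Then for every i with aᵢ > 0, the simplicial cone σᵢ = ⟨v, v₁,…,v_{i−1}, v_{i+1},…,v_s⟩ satisfies det(σᵢ) = aᵢ·det(σ); in particular det(σᵢ) < det(σ). (Hence a star subdivision at a minimal point strictly decreases the determinants of all subdivided cones.) -/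
universe u

/-- Clearing denominators of a finite family of rationals. -/
lemma exists_common_denominator {s : ℕ} (a : Fin s → ℚ) :
    ∃ (d : ℕ) (n : Fin s → ℤ), 0 < d ∧ ∀ j, ((n j : ℚ)) = a j * d := by
  refine ⟨∏ j, (a j).den,
    fun j => (a j).num * (((∏ j, (a j).den) / (a j).den : ℕ) : ℤ),
    Finset.prod_pos fun j _ => (a j).pos, fun j => ?_⟩
  obtain ⟨k, hk⟩ := Finset.dvd_prod_of_mem (fun j => (a j).den) (Finset.mem_univ j)
  have h2 : ((a j).den : ℚ) ≠ 0 := by positivity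
  have hden : a j * ((a j).den : ℚ) = (a j).num :=
    (eq_div_iff h2).mp (Rat.num_div_den (a j)).symm
  have h3 : (((a j).den : ℤ)) ≠ 0 := by positivity
  simp only [hk]
  push_cast
  rw [Int.mul_ediv_cancel_left _ h3]
  push_cast
  rw [← mul_assoc, hden]

/-- Let `x = ∑ aⱼ • vⱼ` be a minimal vector of a simplicial cone
`σ = ⟨v₁,…,v_s⟩` (so `0 ≤ aⱼ < 1`). For every `i` with `aᵢ > 0`, the cone
`σᵢ = ⟨x, v₁,…,v̌ᵢ,…,v_s⟩` (obtained from `σ` by replacing `vᵢ` with `x`) satisfies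
`det σᵢ = aᵢ · det σ`; in particular `det σᵢ < det σ`. -/

theorem star_subdivision_at_minimal_point_decreases_det
    {V : Type u} [AddCommGroup V] [Module ℚ V] (N : Submodule ℤ V) [Module.Finite ℤ ↥N]
    {s : ℕ} (v : Fin s → V)
    (hind : LinearIndependent ℚ v) (hprim : ∀ j, IsPrimitive N (v j))
    (hv : ∀ j, v j ∈ latticeOf N v)
    (b : Module.Basis (Fin s) ℤ ↥(latticeOf N v))
    (x : V) (hxmin : IsMinimalVec N v x)
    (a : Fin s → ℚ) (ha0 : ∀ j, 0 ≤ a j) (ha1 : ∀ j, a j < 1)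
    (hx : x = ∑ j, a j • v j)
    (i : Fin s) (hai : 0 < a i)
    (hmem : ∀ q, Function.update v i x q ∈ latticeOf N v) :
    (((Matrix.of fun p q => b.repr ⟨Function.update v i x q, hmem q⟩ p).det.natAbs : ℚ)
        = a i * ((coneDet N v hv b).natAbs : ℚ))
      ∧ (Matrix.of fun p q => b.repr ⟨Function.update v i x q, hmem q⟩ p).det.natAbs
          < (coneDet N v hv b).natAbs := by
  classical
  set M : Matrix (Fin s) (Fin s) ℤ :=
    Matrix.of fun p q => b.repr ⟨v q, hv q⟩ p with hM
  set M' : Matrix (Fin s) (Fin s) ℤ :=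
    Matrix.of fun p q => b.repr ⟨Function.update v i x q, hmem q⟩ p with hM'
  have hxL : x ∈ latticeOf N v := by simpa using hmem i
  set xl : ↥(latticeOf N v) := ⟨x, hxL⟩ with hxl
  set Mq : Matrix (Fin s) (Fin s) ℚ := M.map (Int.cast : ℤ → ℚ) with hMq
  set M'q : Matrix (Fin s) (Fin s) ℚ := M'.map (Int.cast : ℤ → ℚ) with hM'q
  obtain ⟨d, n, hd, hdn⟩ := exists_common_denominator a
  have hdx : (d : ℤ) • x = ∑ j, n j • v j := by
    have h : (d : ℚ) • x = ∑ j, ((n j : ℚ)) • v j := by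
      rw [hx, Finset.smul_sum]
      refine Finset.sum_congr rfl fun j _ => ?_
      rw [hdn j, mul_comm, mul_smul]
    calc (d : ℤ) • x = ((d : ℤ) : ℚ) • x := (Int.cast_smul_eq_zsmul ℚ _ _).symm
      _ = ∑ j, ((n j : ℚ)) • v j := by rw [Int.cast_natCast]; exact h
      _ = ∑ j, n j • v j := Finset.sum_congr rfl fun j _ => Int.cast_smul_eq_zsmul ℚ _ _
  have hdxl : (d : ℤ) • xl = ∑ j, n j • (⟨v j, hv j⟩ : ↥(latticeOf N v)) := by
    apply Subtype.ext
    push_cast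
    exact hdx
  have hrepr : ∀ p, ((b.repr xl p : ℚ)) = ∑ j, a j * ((b.repr ⟨v j, hv j⟩ p : ℚ)) := by
    intro p
    have h1 : (d : ℤ) • b.repr xl = ∑ j, n j • b.repr ⟨v j, hv j⟩ := by
      rw [← map_smul, hdxl, map_sum]
      exact Finset.sum_congr rfl fun j _ => map_smul _ _ _
    have h2 : (d : ℤ) * b.repr xl p = ∑ j, n j * b.repr ⟨v j, hv j⟩ p := by
      have := DFunLike.congr_fun h1 p
      simpa using this
    have h3 : ((d : ℚ)) * ((b.repr xl p : ℚ))
        = ∑ j, (a j * d) * ((b.repr ⟨v j, hv j⟩ p : ℚ)) := by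
      have h := congrArg (Int.cast : ℤ → ℚ) h2
      push_cast at h
      rw [h]
      exact Finset.sum_congr rfl fun j _ => by rw [← hdn j]
    have hd' : (d : ℚ) ≠ 0 := by positivity
    have h4 : ((d : ℚ)) * ((b.repr xl p : ℚ))
        = ((d : ℚ)) * ∑ j, a j * ((b.repr ⟨v j, hv j⟩ p : ℚ)) := by
      rw [h3, Finset.mul_sum]
      exact Finset.sum_congr rfl fun j _ => by ring
    exact mul_left_cancel₀ hd' h4
  have hcol : M'q = Mq.updateCol i (fun p => ∑ j, a j • Mq p j) := by
    ext p q
    rw [Matrix.updateCol_apply]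
    by_cases hq : q = i
    · rw [if_pos hq]
      have he : (⟨Function.update v i x q, hmem q⟩ : ↥(latticeOf N v)) = xl :=
        Subtype.ext (by rw [hq]; simp [hxl])
      rw [hM'q, Matrix.map_apply, hM', Matrix.of_apply, he]
      simpa [hMq, hM, smul_eq_mul] using hrepr p
    · rw [if_neg hq]
      have he : (⟨Function.update v i x q, hmem q⟩ : ↥(latticeOf N v)) = ⟨v q, hv q⟩ :=
        Subtype.ext (by simp [Function.update_of_ne hq])
      rw [hM'q, Matrix.map_apply, hM', Matrix.of_apply, he]
      rfl
  have hdetq : M'q.det = a i * Mq.det := by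
    rw [hcol, Matrix.det_updateCol_sum, smul_eq_mul]
  have hMdet : ((M.det : ℚ)) = Mq.det := ((Int.castRingHom ℚ).map_det M)
  have hM'det : ((M'.det : ℚ)) = M'q.det := ((Int.castRingHom ℚ).map_det M')
  have hvq : ∀ q, v q = ∑ p, ((Mq p q)) • ((b p : ↥(latticeOf N v)) : V) := by
    intro q
    have hsr := b.sum_repr ⟨v q, hv q⟩
    have h := congrArg (Subtype.val : ↥(latticeOf N v) → V) hsr
    push_cast at h
    rw [← h]
    refine Finset.sum_congr rfl fun p _ => ?_
    rw [hMq, Matrix.map_apply, Int.cast_smul_eq_zsmul]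
    rfl
  have hdet0 : Mq.det ≠ 0 := by
    intro h0
    obtain ⟨c, hc0, hc⟩ := Matrix.exists_mulVec_eq_zero_iff.mpr h0
    have hsum : ∑ q, c q • v q = 0 := by
      have heq : ∑ q, c q • v q = ∑ p, (∑ q, Mq p q * c q) • ((b p : ↥(latticeOf N v)) : V) := by
        simp only [hvq, Finset.smul_sum, smul_smul]
        rw [Finset.sum_comm]
        refine Finset.sum_congr rfl fun p _ => ?_
        rw [Finset.sum_smul]
        exact Finset.sum_congr rfl fun q _ => by rw [mul_comm]
      rw [heq]
      have hz : ∀ p, ∑ q, Mq p q * c q = 0 := by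
        intro p
        have := congrFun hc p
        simpa [Matrix.mulVec, dotProduct] using this
      simp [hz]
    have := Fintype.linearIndependent_iff.mp hind c hsum
    exact hc0 (funext this)
  have hMdet0 : M.det ≠ 0 := fun h => hdet0 (by rw [← hMdet, h, Int.cast_zero])
  have habs : ((M'.det.natAbs : ℚ)) = a i * ((M.det.natAbs : ℚ)) := by
    rw [Nat.cast_natAbs, Nat.cast_natAbs, Int.cast_abs, Int.cast_abs, hMdet, hM'det, hdetq,
      abs_mul, abs_of_pos hai]
  have hconeDet : coneDet N v hv b = M.det := rfl
  have hpos : (0 : ℚ) < ((M.det.natAbs : ℚ)) := by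
    have hne : M.det.natAbs ≠ 0 := fun h => hMdet0 (Int.natAbs_eq_zero.mp h)
    positivity
  have hlt : ((M'.det.natAbs : ℚ)) < ((M.det.natAbs : ℚ)) := by
    rw [habs]
    calc a i * ((M.det.natAbs : ℚ)) < 1 * ((M.det.natAbs : ℚ)) :=
          mul_lt_mul_of_pos_right (ha1 i) hpos
      _ = ((M.det.natAbs : ℚ)) := one_mul _
  constructor
  · rw [hconeDet]; exact habs
  · rw [hconeDet]; exact_mod_cast hlt
end

section
/- Let (σ,ω) be a relatively simplicial pair in a lattice N, with σ = ⟨v₁,…,v_k, w₁,…,w_s⟩ and ω = ⟨w₁,…,w_s⟩ a face of σ, and let v be a minimal vector of the pair (σ,ω), written v = Σᵢ aᵢvᵢ + Σⱼ cⱼwⱼ with 0 ≤ aᵢ < 1 and cⱼ ≥ 0. Then for every i with aᵢ > 0, the pair (σᵢ, ω) with σᵢ = ⟨v, v₁,…,v_{i−1}, v_{i+1},…,v_k, w₁,…,w_s⟩ satisfies det(σᵢ,ω) = aᵢ·det(σ,ω); in particular det(σᵢ,ω) < det(σ,ω). -/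
universe u

/-- Denominator clearing for a finite family of rationals. -/
lemma exists_int_scale {k : ℕ} (c : Fin k → ℚ) :
    ∃ (d : ℕ) (n : Fin k → ℤ), 0 < d ∧ ∀ q, (n q : ℚ) = (d : ℚ) * c q := by
  classical
  refine ⟨∏ q, (c q).den, fun q => (c q).num * (((∏ q, (c q).den) / (c q).den : ℕ) : ℤ),
    Finset.prod_pos fun q _ => (c q).pos, fun q => ?_⟩
  have hdvd : (c q).den ∣ ∏ q, (c q).den := Finset.dvd_prod_of_mem _ (Finset.mem_univ q)
  have h2 : ((∏ q, (c q).den : ℕ) : ℚ)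
      = ((c q).den : ℚ) * (((∏ q, (c q).den) / (c q).den : ℕ) : ℚ) := by
    rw [← Nat.cast_mul, Nat.mul_div_cancel' hdvd]
  have h3 : ((c q).den : ℚ) * c q = ((c q).num : ℚ) := Rat.den_mul_eq_num _
  rw [Int.cast_mul, Int.cast_natCast, h2]
  linear_combination -(((∏ q, (c q).den) / (c q).den : ℕ) : ℚ) * h3


/-- Let `x = ∑ aᵢ • vᵢ + ∑ cⱼ • wⱼ` (with `0 ≤ aᵢ < 1`, `cⱼ ≥ 0`) be a
minimal vector of a relatively simplicial pair `(σ, ω)`, where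
`σ = ⟨v₁,…,v_k, w₁,…,w_s⟩` and `ω = ⟨w₁,…,w_s⟩` is a face of `σ`. For every `i` with
`aᵢ > 0`, the pair `(σᵢ, ω)`, where `σᵢ` is obtained by replacing `vᵢ` with `x`, satisfies
`det(σᵢ,ω) = aᵢ · det(σ,ω)`; in particular `det(σᵢ,ω) < det(σ,ω)`. -/
theorem relative_star_subdivision_at_minimal_point_decreases_det
    {V : Type u} [AddCommGroup V] [Module ℚ V] (N : Submodule ℤ V) [Module.Finite ℤ ↥N]
    {k s : ℕ} (v : Fin k → V) (w : Fin s → V)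
    (hsc : StrictlyConvexCone (Fin.append v w))
    (hface : IsFaceOf (coneSpan (Fin.append v w)) (coneSpan w))
    (hrel : RelSimplicial v w)
    (hprim : ∀ idx, IsPrimitive N (Fin.append v w idx))
    (hv : ∀ q, v q ∈ latticeOf N (Fin.append v w))
    (b : Module.Basis (Fin k) ℤ
      (↥(latticeOf N (Fin.append v w)) ⧸
        Submodule.comap (latticeOf N (Fin.append v w)).subtype (latticeOf N w)))
    (x : V) (hmin : IsMinimalVec N (Fin.append v w) x) (hnot : x ∉ coneSpan w)
    (a : Fin k → ℚ) (c : Fin s → ℚ)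
    (ha0 : ∀ i, 0 ≤ a i) (ha1 : ∀ i, a i < 1) (hc : ∀ j, 0 ≤ c j)
    (hx : x = (∑ i, a i • v i) + ∑ j, c j • w j)
    (i : Fin k) (hai : 0 < a i)
    (hmem : ∀ q, Function.update v i x q ∈ latticeOf N (Fin.append v w)) :
    (((Matrix.of fun p q =>
          b.repr (Submodule.Quotient.mk ⟨Function.update v i x q, hmem q⟩) p).det.natAbs : ℚ)
        = a i * (((Matrix.of fun p q =>
            b.repr (Submodule.Quotient.mk ⟨v q, hv q⟩) p).det.natAbs : ℚ)))
      ∧ (Matrix.of fun p q =>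
            b.repr (Submodule.Quotient.mk ⟨Function.update v i x q, hmem q⟩) p).det.natAbs
          < (Matrix.of fun p q =>
            b.repr (Submodule.Quotient.mk ⟨v q, hv q⟩) p).det.natAbs := by
  classical
  have hxmem : x ∈ latticeOf N (Fin.append v w) := by
    have h := hmem i
    rwa [Function.update_self] at h
  set A : Matrix (Fin k) (Fin k) ℤ :=
    Matrix.of fun p q => b.repr (Submodule.Quotient.mk ⟨v q, hv q⟩) p with hAdef
  set A' : Matrix (Fin k) (Fin k) ℤ :=
    Matrix.of fun p q =>
      b.repr (Submodule.Quotient.mk ⟨Function.update v i x q, hmem q⟩) p with hA'def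
  have hcast : ∀ (m : ℤ) (u : V), m • u = ((m : ℚ)) • u := fun m u =>
    (Int.cast_smul_eq_zsmul ℚ m u).symm
  have hm : ∀ (B : Matrix (Fin k) (Fin k) ℤ),
      ((B.det : ℤ) : ℚ) = (B.map ((↑) : ℤ → ℚ)).det := fun B =>
    RingHom.map_det (Int.castRingHom ℚ) B
  -- clear denominators of `a`
  obtain ⟨d, n, hd, hn⟩ := exists_int_scale a
  have hyw : ((d : ℤ) • x - ∑ q, n q • v q) ∈ Submodule.span ℚ (Set.range w) := by
    have heq : (d : ℤ) • x - ∑ q, n q • v q = ∑ j, ((d : ℚ) * c j) • w j := by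
      rw [hx]
      simp only [hcast, hn, Int.cast_natCast, smul_add, Finset.smul_sum, smul_smul]
      abel
    rw [heq]
    exact Submodule.sum_mem _ fun j _ =>
      Submodule.smul_mem _ _ (Submodule.subset_span ⟨j, rfl⟩)
  have hyN : ((d : ℤ) • x - ∑ q, n q • v q) ∈ N :=
    sub_mem (Submodule.smul_mem _ _ ((Submodule.mem_inf.mp hxmem).1))
      (Submodule.sum_mem _ fun q _ =>
        Submodule.smul_mem _ _ ((Submodule.mem_inf.mp (hv q)).1))
  have hq0 : ((d : ℤ) • (⟨x, hxmem⟩ : (latticeOf N (Fin.append v w))) - ∑ q, n q • (⟨v q, hv q⟩ : (latticeOf N (Fin.append v w)))) ∈ (Submodule.comap (latticeOf N (Fin.append v w)).subtype (latticeOf N w)) := by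
    rw [Submodule.mem_comap]
    have hco : ((latticeOf N (Fin.append v w)).subtype ((d : ℤ) • (⟨x, hxmem⟩ : (latticeOf N (Fin.append v w))) - ∑ q, n q • (⟨v q, hv q⟩ : (latticeOf N (Fin.append v w)))) : V)
        = (d : ℤ) • x - ∑ q, n q • v q := by
      simp
    rw [hco]
    exact Submodule.mem_inf.mpr ⟨hyN, hyw⟩
  have hkey : (d : ℤ) • Submodule.Quotient.mk (p := (Submodule.comap (latticeOf N (Fin.append v w)).subtype (latticeOf N w))) ⟨x, hxmem⟩
      = ∑ q, n q • Submodule.Quotient.mk (p := (Submodule.comap (latticeOf N (Fin.append v w)).subtype (latticeOf N w))) ⟨v q, hv q⟩ := by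
    have h0 : (Submodule.comap (latticeOf N (Fin.append v w)).subtype (latticeOf N w)).mkQ ((d : ℤ) • (⟨x, hxmem⟩ : (latticeOf N (Fin.append v w))) - ∑ q, n q • (⟨v q, hv q⟩ : (latticeOf N (Fin.append v w)))) = 0 :=
      (Submodule.Quotient.mk_eq_zero (Submodule.comap (latticeOf N (Fin.append v w)).subtype (latticeOf N w))).mpr hq0
    rw [map_sub, map_smul, map_sum, sub_eq_zero] at h0
    simp only [map_smul, Submodule.mkQ_apply] at h0
    exact h0
  have hrepr : ∀ p, (d : ℤ) * (b.repr (Submodule.Quotient.mk (p := (Submodule.comap (latticeOf N (Fin.append v w)).subtype (latticeOf N w))) ⟨x, hxmem⟩) p)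
      = ∑ q, n q * A p q := by
    intro p
    have h := congrArg (fun z => (b.repr z) p) hkey
    simpa [map_smul, map_sum, Finsupp.smul_apply, Finset.sum_apply,
      smul_eq_mul, hAdef] using h
  have hd0 : ((d : ℚ)) ≠ 0 := by positivity
  have hreprQ : ∀ p, ((b.repr (Submodule.Quotient.mk (p := (Submodule.comap (latticeOf N (Fin.append v w)).subtype (latticeOf N w))) ⟨x, hxmem⟩) p : ℚ))
      = ∑ q, a q * (A p q : ℚ) := by
    intro p
    have h := congrArg (fun z : ℤ => (z : ℚ)) (hrepr p)
    push_cast at h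
    refine mul_left_cancel₀ hd0 ?_
    rw [h, Finset.mul_sum]
    refine Finset.sum_congr rfl fun q _ => ?_
    rw [hn q, mul_assoc]
  -- the determinant identity over ℚ
  have hA'map : (A'.map ((↑) : ℤ → ℚ))
      = (A.map ((↑) : ℤ → ℚ)).updateCol i
          (fun p => ∑ q, a q • (A.map ((↑) : ℤ → ℚ)) p q) := by
    ext p q
    by_cases hq : q = i
    · rw [hq]
      rw [Matrix.updateCol_self]
      have hsub : (⟨Function.update v i x i, hmem i⟩ : (latticeOf N (Fin.append v w))) = ⟨x, hxmem⟩ :=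
        Subtype.ext (Function.update_self i x v)
      simp [hA'def, Matrix.map_apply, hsub, hreprQ p, smul_eq_mul]
    · rw [Matrix.updateCol_ne hq]
      have hsub : (⟨Function.update v i x q, hmem q⟩ : (latticeOf N (Fin.append v w))) = ⟨v q, hv q⟩ :=
        Subtype.ext (Function.update_of_ne hq x v)
      simp [hA'def, hAdef, Matrix.map_apply, hsub]
  have hdetQ : ((A'.det : ℤ) : ℚ) = a i * ((A.det : ℤ) : ℚ) := by
    rw [hm, hm, hA'map, Matrix.det_updateCol_sum, smul_eq_mul]
  have habs : ((A'.det.natAbs : ℚ)) = a i * ((A.det.natAbs : ℚ)) := by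
    rw [Nat.cast_natAbs, Nat.cast_natAbs, Int.cast_abs, Int.cast_abs, hdetQ,
      abs_mul, abs_of_pos hai]
  -- nonvanishing of `det A`
  have hdet0 : A.det ≠ 0 := by
    intro h0
    have h0q : (A.map ((↑) : ℤ → ℚ)).det = 0 := by
      rw [← hm, h0, Int.cast_zero]
    obtain ⟨cc, hcc0, hcc⟩ := (Matrix.exists_mulVec_eq_zero_iff).mpr h0q
    obtain ⟨D, mm, hD, hmD⟩ := exists_int_scale cc
    have hD0 : ((D : ℚ)) ≠ 0 := by positivity
    have hmul : ∀ p, ∑ q, mm q * A p q = 0 := by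
      intro p
      have h1 := congrFun hcc p
      have hz : ∑ q, (mm q : ℚ) * (A p q : ℚ) = 0 := by
        have : ∑ q, (mm q : ℚ) * (A p q : ℚ)
            = (D : ℚ) * ∑ q, (A.map ((↑) : ℤ → ℚ)) p q * cc q := by
          rw [Finset.mul_sum]
          refine Finset.sum_congr rfl fun q _ => ?_
          rw [hmD q, Matrix.map_apply]
          ring
        rw [this]
        have h2 : ∑ q, (A.map ((↑) : ℤ → ℚ)) p q * cc q = 0 := h1
        rw [h2, mul_zero]
      exact_mod_cast hz
    have hsum0 : (∑ q, mm q • Submodule.Quotient.mk (p := (Submodule.comap (latticeOf N (Fin.append v w)).subtype (latticeOf N w))) ⟨v q, hv q⟩) = 0 := by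
      have hb : b.repr (∑ q, mm q • Submodule.Quotient.mk (p := (Submodule.comap (latticeOf N (Fin.append v w)).subtype (latticeOf N w))) ⟨v q, hv q⟩) = 0 := by
        rw [map_sum]
        ext p
        simpa [map_smul, Finsupp.smul_apply, Finset.sum_apply, smul_eq_mul, hAdef]
          using hmul p
      exact b.repr.map_eq_zero_iff.mp hb
    have hsum0' : (∑ q, mm q • (⟨v q, hv q⟩ : (latticeOf N (Fin.append v w)))) ∈ (Submodule.comap (latticeOf N (Fin.append v w)).subtype (latticeOf N w)) := by
      have hz : (Submodule.comap (latticeOf N (Fin.append v w)).subtype (latticeOf N w)).mkQ (∑ q, mm q • (⟨v q, hv q⟩ : (latticeOf N (Fin.append v w)))) = 0 := by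
        rw [map_sum]
        simp only [map_smul, Submodule.mkQ_apply]
        exact hsum0
      exact (Submodule.Quotient.mk_eq_zero (Submodule.comap (latticeOf N (Fin.append v w)).subtype (latticeOf N w))).mp hz
    have hVmem : (∑ q, mm q • v q) ∈ Submodule.span ℚ (Set.range w) := by
      rw [Submodule.mem_comap] at hsum0'
      have hco : ((latticeOf N (Fin.append v w)).subtype (∑ q, mm q • (⟨v q, hv q⟩ : (latticeOf N (Fin.append v w)))) : V) = ∑ q, mm q • v q := by
        simp
      rw [hco] at hsum0'
      exact (Submodule.mem_inf.mp hsum0').2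
    obtain ⟨dc, hdc⟩ := (Submodule.mem_span_range_iff_exists_fun ℚ).mp hVmem
    have hz := hrel (fun q => (mm q : ℚ)) (fun j => -dc j) ?_
    · apply hcc0
      funext q
      have h1 : (mm q : ℚ) = 0 := hz q
      have h2 := hmD q
      rw [h1] at h2
      exact (mul_eq_zero.mp h2.symm).resolve_left hD0
    · have hcv : ∑ q, (mm q : ℚ) • v q = ∑ q, mm q • v q :=
        Finset.sum_congr rfl fun q _ => (hcast _ _).symm
      rw [hcv, ← hdc, ← Finset.sum_add_distrib]
      refine Finset.sum_eq_zero fun j _ => ?_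
      simp
  have hApos : 0 < A.det.natAbs := Int.natAbs_pos.mpr hdet0
  refine ⟨habs, ?_⟩
  have hlt : ((A'.det.natAbs : ℚ)) < ((A.det.natAbs : ℚ)) := by
    rw [habs]
    have : a i * ((A.det.natAbs : ℚ)) < 1 * ((A.det.natAbs : ℚ)) :=
      mul_lt_mul_of_pos_right (ha1 i) (by exact_mod_cast hApos)
    simpa using this
  exact_mod_cast hlt
end

section
/- For all positive integers a and b, the vector (1,0,1) does not belong to the subgroup of ℤ³ generated by (2,0,0), (0,2,0), (1,1,0) and (a,a,2b). Consequently these four vectors do not generate the lattice N = {x ∈ ℤ³ : x₁ + x₂ + x₃ ∈ 2ℤ}, even though (1,0,1) ∈ N. (This is the obstruction showing that the ℤ/2-equivariant relative desingularization of the pair (σ,ω) in the obstruction example does not exist: any ℤ/2-invariant vector has the form (a,a,2b), and the cone ⟨(2,0,0),(0,2,0),(a,a,2b)⟩ is never regular relative to ω = ⟨(2,0,0),(0,2,0)⟩.) -/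
/-- **obstruction to equivariant relative desingularization.** For all
positive integers `a`, `b`, the vector `(1,0,1)` does not lie in the subgroup of `ℤ³`
generated by `(2,0,0)`, `(0,2,0)`, `(1,1,0)` and `(a,a,2b)`; consequently these four vectors
do not generate the lattice `N = {x ∈ ℤ³ : x₁ + x₂ + x₃ ∈ 2ℤ}`, even though
`(1,0,1) ∈ N`. -/
theorem obstruction_vector_not_in_span (a b : ℤ) (ha : 0 < a) (hb : 0 < b) :
    ![1, 0, 1] ∉ Submodule.span ℤ
        ({![2,0,0], ![0,2,0], ![1,1,0], ![a, a, 2*b]} : Set (Fin 3 → ℤ))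
    ∧ (2 : ℤ) ∣ (![1, 0, 1] 0 + ![1, 0, 1] 1 + ![1, 0, 1] 2)
    ∧ ¬ ∀ x : Fin 3 → ℤ, (2 : ℤ) ∣ (x 0 + x 1 + x 2) →
        x ∈ Submodule.span ℤ
          ({![2,0,0], ![0,2,0], ![1,1,0], ![a, a, 2*b]} : Set (Fin 3 → ℤ)) := by
  have key : ∀ v : Fin 3 → ℤ, v ∈ Submodule.span ℤ
      ({![2,0,0], ![0,2,0], ![1,1,0], ![a, a, 2*b]} : Set (Fin 3 → ℤ)) →
      (2 : ℤ) ∣ v 2 := by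
    intro v hv
    induction hv using Submodule.span_induction with
    | mem x hx =>
      rcases hx with h | h | h | h <;> subst h <;> simp
    | zero => simp
    | add x y _ _ hx hy => exact (Pi.add_apply x y 2) ▸ dvd_add hx hy
    | smul c x _ hx => exact (Pi.smul_apply c x 2) ▸ Dvd.dvd.mul_left hx c
  have hnot : ![1, 0, 1] ∉ Submodule.span ℤ
      ({![2,0,0], ![0,2,0], ![1,1,0], ![a, a, 2*b]} : Set (Fin 3 → ℤ)) := by
    intro h
    have := key _ h
    norm_num [Matrix.cons_val_two] at this
  refine ⟨hnot, by norm_num [Matrix.cons_val_two], fun h => hnot (h _ (by norm_num [Matrix.cons_val_two]))⟩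
end

section
/- Let K be a perfect field of characteristic p > 0 and let f = X^p − Y^p·Z in the polynomial ring K[X,Y,Z,W]. Then for every point q = (q₁,q₂,q₃,q₄) ∈ K⁴, the polynomial f lies in the p-th power m_q^p of the maximal ideal m_q = (X−q₁, Y−q₂, Z−q₃, W−q₄) if and only if q₁ = 0 and q₂ = 0. (That is, the locus Sing_p of points of order p of the hypersurface x^p = y^p z is exactly the plane V(x,y).) -/
open MvPolynomial

/-- Over a perfect field `K` of characteristic `p > 0`, the polynomial
`f = X^p − Y^p·Z ∈ K[X,Y,Z,W]` lies in the `p`-th power of the maximal ideal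
`m_q = (X−q₁, Y−q₂, Z−q₃, W−q₄)` of a point `q ∈ K⁴` if and only if `q₁ = 0` and `q₂ = 0`:
the order-`p` locus of the hypersurface `x^p = y^p z` is exactly the plane `V(x,y)`. -/
theorem pinch_point_order_p_locus (K : Type*) [Field K] (p : ℕ) (hp : p.Prime)
    [CharP K p] [PerfectField K] (q : Fin 4 → K) :
    (MvPolynomial.X 0 ^ p - MvPolynomial.X 1 ^ p * MvPolynomial.X 2 :
        MvPolynomial (Fin 4) K) ∈
      (Ideal.span (Set.range fun i : Fin 4 =>
        MvPolynomial.X i - MvPolynomial.C (q i))) ^ p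
    ↔ q 0 = 0 ∧ q 1 = 0 := by
  set I : Ideal (MvPolynomial (Fin 4) K) :=
    Ideal.span (Set.range fun i : Fin 4 => MvPolynomial.X i - MvPolynomial.C (q i)) with hI
  have hgen : ∀ i : Fin 4, (X i - C (q i) : MvPolynomial (Fin 4) K) ∈ I := by
    intro i
    exact Ideal.subset_span ⟨i, rfl⟩
  have hevalI : ∀ g ∈ I, eval q g = 0 := by
    intro g hg
    have : I ≤ RingHom.ker (eval q) := by
      rw [hI, Ideal.span_le]
      rintro _ ⟨i, rfl⟩
      simp [RingHom.mem_ker]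
    exact this hg
  have hp2 : 2 ≤ p := hp.two_le
  constructor
  · intro hf
    have hf1 : (X 0 ^ p - X 1 ^ p * X 2 : MvPolynomial (Fin 4) K) ∈ I := by
      have : I ^ p ≤ I ^ 1 := Ideal.pow_le_pow_right (by omega)
      simpa using this hf
    have hf2 : (X 0 ^ p - X 1 ^ p * X 2 : MvPolynomial (Fin 4) K) ∈ I * I := by
      have : I ^ p ≤ I ^ 2 := Ideal.pow_le_pow_right hp2
      rw [pow_two] at this
      exact this hf
    -- derivative fact
    have hder : ∀ g ∈ I * I, eval q (pderiv 2 g) = 0 := by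
      intro g hg
      refine Submodule.mul_induction_on hg ?_ ?_
      · intro a ha b hb
        simp [hevalI a ha, hevalI b hb]
      · intro x y hx hy
        simp [hx, hy]
    have h1 : eval q (pderiv 2 (X 0 ^ p - X 1 ^ p * X 2 : MvPolynomial (Fin 4) K)) = 0 :=
      hder _ hf2
    have hq1 : q 1 = 0 := by
      have : (q 1) ^ p = 0 := by
        simpa [pderiv_pow, pderiv_X] using h1
      exact pow_eq_zero_iff hp.ne_zero |>.mp this
    have h0 : eval q (X 0 ^ p - X 1 ^ p * X 2 : MvPolynomial (Fin 4) K) = 0 :=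
      hevalI _ hf1
    have hq0 : q 0 = 0 := by
      have : (q 0) ^ p = 0 := by
        simpa [hq1, hp.ne_zero] using h0
      exact pow_eq_zero_iff hp.ne_zero |>.mp this
    exact ⟨hq0, hq1⟩
  · rintro ⟨hq0, hq1⟩
    have hX0 : (X 0 : MvPolynomial (Fin 4) K) ∈ I := by
      have := hgen 0; rwa [hq0, map_zero, sub_zero] at this
    have hX1 : (X 1 : MvPolynomial (Fin 4) K) ∈ I := by
      have := hgen 1; rwa [hq1, map_zero, sub_zero] at this
    have key : (X 0 ^ p - X 1 ^ p * X 2 : MvPolynomial (Fin 4) K)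
        = X 0 ^ p - X 1 ^ p * (X 2 - C (q 2)) - C (q 2) * X 1 ^ p := by ring
    rw [key]
    refine sub_mem (sub_mem (Ideal.pow_mem_pow hX0 p) ?_) ?_
    · exact Ideal.mul_mem_right _ _ (Ideal.pow_mem_pow hX1 p)
    · exact Ideal.mul_mem_left _ _ (Ideal.pow_mem_pow hX1 p)
end

section
/- Let σ = τ ⊕ ρ be a direct sum decomposition of a strictly convex finitely generated cone σ in a lattice N, meaning N_σ = N_τ ⊕ N_ρ and σ = τ + ρ, where τ and ρ are strictly convex finitely generated cones with τ ⊆ N_τ ⊗ ℚ and ρ ⊆ N_ρ ⊗ ℚ, and ρ is regular. Then every irreducible face of σ is contained in τ. (This observation implies that every strictly convex finitely generated cone σ has a unique maximal irreducible face sing(σ), so that σ = sing(σ) × reg(σ) with reg(σ) regular.) -/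
universe u

section Aux

variable {V : Type u} [AddCommGroup V] [Module ℚ V]

lemma self_mem_coneSpan {k : ℕ} (v : Fin k → V) (i : Fin k) : v i ∈ coneSpan v := by
  classical
  refine ⟨fun j => if j = i then 1 else 0, fun j => by positivity, ?_⟩
  simp [ite_smul]

lemma coneSpan_subset_span {k : ℕ} (v : Fin k → V) :
    coneSpan v ⊆ (Submodule.span ℚ (Set.range v) : Set V) := by
  rintro x ⟨c, -, rfl⟩
  exact Submodule.sum_mem _ fun i _ =>
    Submodule.smul_mem _ _ (Submodule.subset_span (Set.mem_range_self i))

lemma coneSpan_comp_subset {k k' : ℕ} (v : Fin k → V) (g : Fin k' → Fin k) :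
    coneSpan (v ∘ g) ⊆ coneSpan v := by
  classical
  rintro x ⟨c, hc, rfl⟩
  refine ⟨fun i => ∑ a ∈ Finset.univ.filter (fun a => g a = i), c a, ?_, ?_⟩
  · intro i; exact Finset.sum_nonneg fun a _ => hc a
  · simp only [Function.comp]
    rw [← Finset.sum_fiberwise Finset.univ g (fun a => c a • v (g a))]
    refine Finset.sum_congr rfl fun i _ => ?_
    rw [Finset.sum_smul]
    refine Finset.sum_congr rfl fun a ha => ?_
    rw [Finset.mem_filter] at ha
    simp [ha.2]

lemma exists_int_smul_mem {k : ℕ} (N : Submodule ℤ V) (v : Fin k → V) (hv : ∀ i, v i ∈ N)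
    {x : V} (hx : x ∈ Submodule.span ℚ (Set.range v)) :
    ∃ d : ℤ, d ≠ 0 ∧ (d : ℤ) • x ∈ latticeOf N v := by
  classical
  obtain ⟨c, rfl⟩ := (Submodule.mem_span_range_iff_exists_fun ℚ).mp hx
  set d : ℤ := ∏ i : Fin k, ((c i).den : ℤ) with hd
  have hdne : d ≠ 0 := by
    refine Finset.prod_ne_zero_iff.mpr fun i _ => ?_
    exact_mod_cast (c i).den_nz
  refine ⟨d, hdne, ?_⟩
  have key : ∀ i : Fin k, ∃ z : ℤ, (d : ℚ) * c i = (z : ℚ) := by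
    intro i
    obtain ⟨e, he⟩ := Finset.dvd_prod_of_mem (fun i : Fin k => ((c i).den : ℤ))
      (Finset.mem_univ i)
    refine ⟨(c i).num * (e : ℤ), ?_⟩
    have hden : ((c i).den : ℚ) * c i = (c i).num := by
      rw [mul_comm]; exact_mod_cast Rat.mul_den_eq_num (c i)
    have heZ : d = ((c i).den : ℤ) * e := by rw [hd]; exact he
    have he' : (d : ℚ) = ((c i).den : ℚ) * (e : ℚ) := by exact_mod_cast heZ
    rw [he', mul_comm ((c i).den : ℚ), mul_assoc, hden]
    push_cast
    ring
  choose z hz using key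
  have hrw : (d : ℤ) • (∑ i, c i • v i) = ∑ i, z i • v i := by
    rw [← Int.cast_smul_eq_zsmul ℚ d, Finset.smul_sum]
    refine Finset.sum_congr rfl fun i _ => ?_
    rw [smul_smul, hz i, Int.cast_smul_eq_zsmul ℚ]
  constructor
  · rw [hrw]
    exact Submodule.sum_mem _ fun i _ => Submodule.smul_mem _ _ (hv i)
  · show (d : ℤ) • _ ∈ (Submodule.span ℚ (Set.range v)).restrictScalars ℤ
    exact Submodule.smul_mem _ _ hx

lemma span_disjoint_of_lattice_disjoint {k k' : ℕ} (N : Submodule ℤ V)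
    (t : Fin k → V) (r : Fin k' → V) (ht : ∀ i, t i ∈ N) (hr : ∀ j, r j ∈ N)
    (hd : Disjoint (latticeOf N t) (latticeOf N r))
    {x : V} (hxt : x ∈ Submodule.span ℚ (Set.range t))
    (hxr : x ∈ Submodule.span ℚ (Set.range r)) : x = 0 := by
  obtain ⟨d, hdne, hdx⟩ := exists_int_smul_mem N t ht hxt
  obtain ⟨d', hdne', hdx'⟩ := exists_int_smul_mem N r hr hxr
  have h1 : (d' * d) • x ∈ latticeOf N t := by
    rw [mul_smul]; exact Submodule.smul_mem _ _ hdx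
  have h2 : (d' * d) • x ∈ latticeOf N r := by
    rw [mul_comm, mul_smul]; exact Submodule.smul_mem _ _ hdx'
  have h0 : (d' * d) • x = 0 := by
    have := hd.le_bot ⟨h1, h2⟩
    simpa using this
  have : ((d' * d : ℤ) : ℚ) • x = 0 := by rw [Int.cast_smul_eq_zsmul]; exact h0
  rcases smul_eq_zero.mp this with h | h
  · exact absurd (by exact_mod_cast h) (mul_ne_zero hdne' hdne)
  · exact h

end Aux
section Aux2

variable {V : Type u} [AddCommGroup V] [Module ℚ V]

lemma coeff_vanish {k : ℕ} (v : Fin k → V) (φ : V →ₗ[ℚ] ℚ)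
    (hφv : ∀ i, 0 ≤ φ (v i)) (c : Fin k → ℚ) (hc : ∀ i, 0 ≤ c i)
    (h0 : φ (∑ i, c i • v i) = 0) : ∀ i, φ (v i) ≠ 0 → c i = 0 := by
  intro i hi
  rw [map_sum] at h0
  simp only [map_smul, smul_eq_mul] at h0
  have hterm := (Finset.sum_eq_zero_iff_of_nonneg
    (fun j _ => mul_nonneg (hc j) (hφv j))).mp h0 i (Finset.mem_univ i)
  rcases mul_eq_zero.mp hterm with h | h
  · exact h
  · exact absurd h hi

lemma face_decomp {m l m₁ l₁ : ℕ} (t : Fin m → V) (r : Fin l → V) (φ : V →ₗ[ℚ] ℚ)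
    (hφv : ∀ i, 0 ≤ φ (Fin.append t r i))
    (e₁ : Fin m₁ ≃ {i : Fin m // φ (t i) = 0})
    (e₂ : Fin l₁ ≃ {j : Fin l // φ (r j) = 0}) :
    {x | x ∈ coneSpan (Fin.append t r) ∧ φ x = 0}
      = coneSpan (Fin.append (fun a => t (e₁ a).1) (fun b => r (e₂ b).1)) := by
  classical
  set t' : Fin m₁ → V := fun a => t (e₁ a).1 with ht'
  set r' : Fin l₁ → V := fun b => r (e₂ b).1 with hr'
  have hg : Fin.append t' r' =
      (Fin.append t r) ∘
        (Fin.append (fun a => Fin.castAdd l (e₁ a).1) (fun b => Fin.natAdd m (e₂ b).1)) := by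
    funext i
    refine Fin.addCases (fun a => ?_) (fun b => ?_) i <;>
      simp [Fin.append_left, Fin.append_right, Function.comp, ht', hr']
  ext x
  constructor
  · rintro ⟨⟨c, hc, rfl⟩, hx0⟩
    have hc0t : ∀ i : Fin m, φ (t i) ≠ 0 → c (Fin.castAdd l i) = 0 := by
      intro i hi
      exact coeff_vanish _ φ hφv c hc hx0 _ (by rwa [Fin.append_left])
    have hc0r : ∀ j : Fin l, φ (r j) ≠ 0 → c (Fin.natAdd m j) = 0 := by
      intro j hj
      exact coeff_vanish _ φ hφv c hc hx0 _ (by rwa [Fin.append_right])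
    refine ⟨Fin.append (fun a => c (Fin.castAdd l (e₁ a).1)) (fun b => c (Fin.natAdd m (e₂ b).1)),
      ?_, ?_⟩
    · intro i
      refine Fin.addCases (fun a => ?_) (fun b => ?_) i
      · rw [Fin.append_left]; exact hc _
      · rw [Fin.append_right]; exact hc _
    · rw [Fin.sum_univ_add, Fin.sum_univ_add]
      simp only [Fin.append_left, Fin.append_right, ht', hr']
      congr 1
      · rw [Equiv.sum_comp e₁
          (fun s : {i : Fin m // φ (t i) = 0} => c (Fin.castAdd l s.1) • t s.1)]
        rw [← Finset.sum_subtype (Finset.univ.filter fun i : Fin m => φ (t i) = 0)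
          (by simp) (fun i => c (Fin.castAdd l i) • t i)]
        rw [Finset.sum_filter_of_ne]
        intro i _ hne
        by_contra hp
        exact hne (by rw [hc0t i hp, zero_smul])
      · rw [Equiv.sum_comp e₂
          (fun s : {j : Fin l // φ (r j) = 0} => c (Fin.natAdd m s.1) • r s.1)]
        rw [← Finset.sum_subtype (Finset.univ.filter fun j : Fin l => φ (r j) = 0)
          (by simp) (fun j => c (Fin.natAdd m j) • r j)]
        rw [Finset.sum_filter_of_ne]
        intro j _ hne
        by_contra hp
        exact hne (by rw [hc0r j hp, zero_smul])
  · intro hx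
    refine ⟨by rw [hg] at hx; exact coneSpan_comp_subset _ _ hx, ?_⟩
    obtain ⟨c, hc, rfl⟩ := hx
    rw [map_sum]
    refine Finset.sum_eq_zero fun i _ => ?_
    rw [map_smul, smul_eq_mul]
    have : φ (Fin.append t' r' i) = 0 := by
      refine Fin.addCases (fun a => ?_) (fun b => ?_) i
      · rw [Fin.append_left]; exact (e₁ a).2
      · rw [Fin.append_right]; exact (e₂ b).2
    rw [this, mul_zero]

end Aux2
section Aux3

variable {V : Type u} [AddCommGroup V] [Module ℚ V]

lemma not_irreducible_face {m l m₁ l₁ : ℕ} (N : Submodule ℤ V)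
    (t : Fin m → V) (r : Fin l → V) (φ : V →ₗ[ℚ] ℚ)
    (htN : ∀ i, t i ∈ N) (hrN : ∀ j, r j ∈ N)
    (hsup : latticeOf N (Fin.append t r) = latticeOf N t ⊔ latticeOf N r)
    (hdisj : Disjoint (latticeOf N t) (latticeOf N r))
    (hreg : IsRegularCone N r)
    (hφv : ∀ i, 0 ≤ φ (Fin.append t r i))
    (e₁ : Fin m₁ ≃ {i : Fin m // φ (t i) = 0})
    (e₂ : Fin l₁ ≃ {j : Fin l // φ (r j) = 0})
    (hl₁ : 0 < l₁) :
    ¬ IsIrreducibleCone N {x | x ∈ coneSpan (Fin.append t r) ∧ φ x = 0} := by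
  classical
  set t' : Fin m₁ → V := fun a => t (e₁ a).1 with ht'
  set r' : Fin l₁ → V := fun b => r (e₂ b).1 with hr'
  set F : Set V := {x | x ∈ coneSpan (Fin.append t r) ∧ φ x = 0} with hFdef
  -- basic span inclusions
  have hsub_t : Submodule.span ℚ (Set.range t') ≤ Submodule.span ℚ (Set.range t) :=
    Submodule.span_mono (by rintro _ ⟨a, rfl⟩; exact ⟨(e₁ a).1, rfl⟩)
  have hsub_r : Submodule.span ℚ (Set.range r') ≤ Submodule.span ℚ (Set.range r) :=
    Submodule.span_mono (by rintro _ ⟨b, rfl⟩; exact ⟨(e₂ b).1, rfl⟩)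
  have htapp : Submodule.span ℚ (Set.range t) ≤
      Submodule.span ℚ (Set.range (Fin.append t r)) :=
    Submodule.span_mono (by rintro _ ⟨i, rfl⟩; exact ⟨Fin.castAdd l i, Fin.append_left t r i⟩)
  have hrapp : Submodule.span ℚ (Set.range r) ≤
      Submodule.span ℚ (Set.range (Fin.append t r)) :=
    Submodule.span_mono (by rintro _ ⟨j, rfl⟩; exact ⟨Fin.natAdd m j, Fin.append_right t r j⟩)
  have hlat_t : latticeOf N t' ≤ latticeOf N t := fun x hx => ⟨hx.1, hsub_t hx.2⟩
  have hlat_r : latticeOf N r' ≤ latticeOf N r := fun x hx => ⟨hx.1, hsub_r hx.2⟩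
  -- the generators of t' and r' lie in F
  have ht'F : ∀ a, t' a ∈ F := by
    intro a
    refine ⟨?_, (e₁ a).2⟩
    have := self_mem_coneSpan (Fin.append t r) (Fin.castAdd l (e₁ a).1)
    rwa [Fin.append_left] at this
  have hr'F : ∀ b, r' b ∈ F := by
    intro b
    refine ⟨?_, (e₂ b).2⟩
    have := self_mem_coneSpan (Fin.append t r) (Fin.natAdd m (e₂ b).1)
    rwa [Fin.append_right] at this
  have hFeq : F = coneSpan (Fin.append t' r') := face_decomp t r φ hφv e₁ e₂
  intro hirr
  refine hirr ⟨m₁, l₁, t', r', hl₁, ?_, hFeq, ?_, hdisj.mono hlat_t hlat_r⟩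
  · -- regularity of r'
    obtain ⟨ι, b, f, hf, hb⟩ := hreg
    exact ⟨ι, b, fun j => f (e₂ j).1,
      hf.comp (Subtype.val_injective.comp e₂.injective), fun j => hb (e₂ j).1⟩
  · -- lattice equality
    apply le_antisymm
    · -- latticeOfSet N F ≤ latticeOf N t' ⊔ latticeOf N r'
      intro x hx
      obtain ⟨hxN, hxspan⟩ := hx
      have hspanF : Submodule.span ℚ F ≤
          Submodule.span ℚ (Set.range t') ⊔ Submodule.span ℚ (Set.range r') := by
        rw [hFeq]
        refine Submodule.span_le.mpr ?_
        rintro y ⟨c, hc, rfl⟩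
        refine Submodule.sum_mem _ fun i _ => Submodule.smul_mem _ _ ?_
        refine Fin.addCases (fun a => ?_) (fun b => ?_) i
        · rw [Fin.append_left]
          exact Submodule.mem_sup_left (Submodule.subset_span ⟨a, rfl⟩)
        · rw [Fin.append_right]
          exact Submodule.mem_sup_right (Submodule.subset_span ⟨b, rfl⟩)
      obtain ⟨a, ha, b, hb, hab⟩ := Submodule.mem_sup.mp (hspanF hxspan)
      have hx2 : x ∈ latticeOf N t ⊔ latticeOf N r := by
        rw [← hsup]
        refine ⟨hxN, ?_⟩
        show x ∈ Submodule.span ℚ (Set.range (Fin.append t r))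
        rw [← hab]
        exact Submodule.add_mem _ (htapp (hsub_t ha)) (hrapp (hsub_r hb))
      obtain ⟨a', ha', b', hb', hab'⟩ := Submodule.mem_sup.mp hx2
      have hkey : a - a' = b' - b := by
        rw [sub_eq_sub_iff_add_eq_add]
        rw [hab, ← hab']
        abel
      have hzero : a - a' = 0 := by
        refine span_disjoint_of_lattice_disjoint N t r htN hrN hdisj ?_ ?_
        · exact Submodule.sub_mem _ (hsub_t ha) ha'.2
        · rw [hkey]
          exact Submodule.sub_mem _ hb'.2 (hsub_r hb)
      have haa' : a = a' := by rwa [sub_eq_zero] at hzero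
      have hbb' : b = b' := by
        have : b' - b = 0 := by rw [← hkey, hzero]
        rw [sub_eq_zero] at this; exact this.symm
      refine Submodule.mem_sup.mpr ⟨a, ⟨haa' ▸ ha'.1, ha⟩, b, ⟨hbb' ▸ hb'.1, hb⟩, hab⟩
    · -- latticeOf N t' ⊔ latticeOf N r' ≤ latticeOfSet N F
      refine sup_le ?_ ?_
      · intro x hx
        exact ⟨hx.1, Submodule.span_mono (Set.range_subset_iff.mpr ht'F) hx.2⟩
      · intro x hx
        exact ⟨hx.1, Submodule.span_mono (Set.range_subset_iff.mpr hr'F) hx.2⟩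

end Aux3
/-- If `σ = τ ⊕ ρ` is a direct sum decomposition of a strictly convex
finitely generated cone (so `σ = τ + ρ` and `N_σ = N_τ ⊕ N_ρ`) with `ρ` regular, then every
irreducible face of `σ` is contained in `τ`. -/
theorem irreducible_face_contained_in_first_factor
    {V : Type u} [AddCommGroup V] [Module ℚ V] (N : Submodule ℤ V) [Module.Finite ℤ ↥N]
    {m l : ℕ} (t : Fin m → V) (r : Fin l → V)
    (hsc : StrictlyConvexCone (Fin.append t r))
    (hvert : IsVertexFamily N (Fin.append t r))
    (hsup : latticeOf N (Fin.append t r) = latticeOf N t ⊔ latticeOf N r)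
    (hdisj : Disjoint (latticeOf N t) (latticeOf N r))
    (hreg : IsRegularCone N r)
    (F : Set V)
    (hF : IsFaceOf (coneSpan (Fin.append t r)) F)
    (hirr : IsIrreducibleCone N F) :
    F ⊆ coneSpan t := by
  classical
  obtain ⟨φ, hφ, hFeq⟩ := hF
  have htN : ∀ i, t i ∈ N := fun i => by
    have := (hvert.1 (Fin.castAdd l i)).1
    rwa [Fin.append_left] at this
  have hrN : ∀ j, r j ∈ N := fun j => by
    have := (hvert.1 (Fin.natAdd m j)).1
    rwa [Fin.append_right] at this
  have hφv : ∀ i, 0 ≤ φ (Fin.append t r i) :=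
    fun i => hφ _ (self_mem_coneSpan _ i)
  by_cases hall : ∀ j, φ (r j) ≠ 0
  · intro x hx
    rw [hFeq] at hx
    obtain ⟨⟨c, hc, rfl⟩, hx0⟩ := hx
    have hr0 : ∀ j, c (Fin.natAdd m j) = 0 := fun j =>
      coeff_vanish _ φ hφv c hc hx0 _ (by rw [Fin.append_right]; exact hall j)
    refine ⟨fun i => c (Fin.castAdd l i), fun i => hc _, ?_⟩
    rw [Fin.sum_univ_add]
    simp [hr0, Fin.append_left]
  · exfalso
    push_neg at hall
    obtain ⟨j₀, hj₀⟩ := hall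
    have hl₁ : 0 < Fintype.card {j : Fin l // φ (r j) = 0} :=
      Fintype.card_pos_iff.mpr ⟨⟨j₀, hj₀⟩⟩
    exact not_irreducible_face N t r φ htN hrN hsup hdisj hreg hφv
      (Fintype.equivFin {i : Fin m // φ (t i) = 0}).symm
      (Fintype.equivFin {j : Fin l // φ (r j) = 0}).symm hl₁ (hFeq ▸ hirr)
end
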